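/- arXiv:math/0604477 — 4 statements merged into one kernel-verified Lean document; each statement's English description precedes it below -/
import Mathlib

section
/- Suppose K has characteristic p > 0, δ_1, …, δ_n are pairwise commuting K-derivations of A with δ_i^p = 0 for all i, and x_1, …, x_n ∈ A satisfy δ_i(x_j) = δ_{ij} (Kronecker delta). Then A = ⊕_{α} A^δ·x^α = ⊕_{α} x^α·A^δ as internal direct sums of K-subspaces, where A^δ := ∩_i A^{δ_i}, α runs over all tuples in {0,1,…,p-1}^n, and x^α denotes the ordered product x_1^{α_1}·x_2^{α_2}·⋯·x_n^{α_n}. -/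
open LinearMap
open Finset

section SingleVar
variable {K A : Type*} [Field K] [Ring A] [Algebra K A]
variable (p : ℕ)

noncomputable def cK (K : Type*) [Field K] (k : ℕ) : K := (-1)^k * ((k.factorial : K))⁻¹

variable (d : Module.End K A) (x : A)

noncomputable def prR : Module.End K A := ∑ k ∈ range p, cK K k • (mulRight K (x^k) ∘ₗ d^k)
noncomputable def RrOp (k : ℕ) : Module.End K A := ((k.factorial : K)⁻¹) • (prR p d x ∘ₗ d^k)
noncomputable def prL : Module.End K A := ∑ k ∈ range p, cK K k • (mulLeft K (x^k) ∘ₗ d^k)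
noncomputable def RlOp (k : ℕ) : Module.End K A := ((k.factorial : K)⁻¹) • (prL p d x ∘ₗ d^k)

lemma prR_apply (a : A) : prR p d x a = ∑ k ∈ range p, cK K k • ((d^k) a * x^k) := by
  simp [prR, LinearMap.sum_apply, mulRight_apply]

lemma prL_apply (a : A) : prL p d x a = ∑ k ∈ range p, cK K k • (x^k * (d^k) a) := by
  simp [prL, LinearMap.sum_apply, mulLeft_apply]

lemma RrOp_apply (k : ℕ) (a : A) :
    RrOp p d x k a = ((k.factorial : K)⁻¹) • prR p d x ((d^k) a) := by
  simp [RrOp]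

lemma RlOp_apply (k : ℕ) (a : A) :
    RlOp p d x k a = ((k.factorial : K)⁻¹) • prL p d x ((d^k) a) := by
  simp [RlOp]

variable {p d x}
variable (hleib : ∀ a b : A, d (a * b) = d a * b + a * d b)

include hleib

lemma deriv_one_leib : d 1 = 0 := by
  have h := hleib 1 1
  rw [mul_one, mul_one, one_mul] at h
  have : d 1 + 0 = d 1 + d 1 := by rw [add_zero]; exact h
  exact (add_left_cancel this).symm

lemma deriv_pow_ker {y : A} (hy : d y = 0) : ∀ k, d (y ^ k) = 0 := by
  intro k
  induction k with
  | zero => simpa using deriv_one_leib hleib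
  | succ n ih => rw [pow_succ, hleib, ih, hy, zero_mul, mul_zero, add_zero]

variable (hdx : d x = 1)
include hdx

lemma deriv_x_pow : ∀ k : ℕ, d (x ^ k) = (k : K) • x ^ (k - 1) := by
  intro k
  induction k with
  | zero => simpa using deriv_one_leib hleib
  | succ n ih =>
    rw [pow_succ, hleib, ih, hdx, mul_one]
    cases n with
    | zero => simp
    | succ m =>
      rw [smul_mul_assoc, ← pow_succ]
      have : m + 1 - 1 + 1 = m + 1 := rfl
      rw [this]
      push_cast
      module

lemma deriv_ker_mul_pow {c : A} (hc : d c = 0) :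
    ∀ j m, (d ^ j) (c * x ^ m) = ((m.descFactorial j : K)) • (c * x ^ (m - j)) := by
  intro j m
  induction j with
  | zero => simp
  | succ n ih =>
    rw [pow_succ', Module.End.mul_apply, ih, map_smul, hleib, hc, zero_mul, zero_add,
      deriv_x_pow hleib hdx]
    rw [mul_smul_comm, smul_smul, Nat.descFactorial_succ, Nat.sub_sub]
    push_cast
    ring_nf

lemma deriv_pow_mul_ker {c : A} (hc : d c = 0) :
    ∀ j m, (d ^ j) (x ^ m * c) = ((m.descFactorial j : K)) • (x ^ (m - j) * c) := by
  intro j m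
  induction j with
  | zero => simp
  | succ n ih =>
    rw [pow_succ', Module.End.mul_apply, ih, map_smul, hleib, hc, mul_zero, add_zero,
      deriv_x_pow hleib hdx]
    rw [smul_mul_assoc, smul_smul, Nat.descFactorial_succ, Nat.sub_sub]
    push_cast
    ring_nf


omit hdx

section WithChar
variable (hp : p.Prime) [CharP K p]
include hp

omit hleib
lemma fact_ne_zero {m : ℕ} (hm : m < p) : ((m.factorial : K)) ≠ 0 := by
  rw [Ne, CharP.cast_eq_zero_iff K p, hp.dvd_factorial]; omega

lemma natCast_ne_zero' {m : ℕ} (h0 : 0 < m) (hm : m < p) : ((m : K)) ≠ 0 := by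
  rw [Ne, CharP.cast_eq_zero_iff K p]
  intro h; exact absurd (Nat.le_of_dvd h0 h) (by omega)

lemma cK_succ {k : ℕ} (hk : k + 1 < p) : cK K (k+1) * ((k+1 : ℕ) : K) = - cK K k := by
  have h2 : ((k.factorial : K)) ≠ 0 := fact_ne_zero hp (by omega)
  have h3 : ((k+1 : ℕ) : K) ≠ 0 := natCast_ne_zero' hp (by omega) hk
  have hfac : (((k+1).factorial : K)) = ((k+1:ℕ):K) * (k.factorial : K) := by
    rw [Nat.factorial_succ]; push_cast; ring
  rw [cK, cK, pow_succ, hfac, mul_inv]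
  push_cast at h3 ⊢
  field_simp

lemma inv_fact_mul_inv_fact {m k : ℕ} (hm : m < p) (hk : k ≤ m) :
    ((k.factorial : K))⁻¹ * (((m-k).factorial : K))⁻¹
      = (m.choose k : K) * ((m.factorial : K))⁻¹ := by
  have hc : ((m.choose k : K)) * (k.factorial : K) * ((m-k).factorial : K)
      = (m.factorial : K) := by
    exact_mod_cast congrArg (Nat.cast (R := K)) (Nat.choose_mul_factorial_mul_factorial hk)
  have h1 : ((k.factorial : K)) ≠ 0 := fact_ne_zero hp (by omega)
  have h2 : (((m-k).factorial : K)) ≠ 0 := fact_ne_zero hp (by omega)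
  have h3 : ((m.factorial : K)) ≠ 0 := fact_ne_zero hp hm
  have h4 : ((m.choose k : K)) ≠ 0 := by
    intro h; rw [h, zero_mul, zero_mul] at hc; exact h3 hc.symm
  rw [← hc]
  field_simp

lemma alt_sum_K (m : ℕ) :
    ∑ k ∈ range (m+1), ((-1:K)^k * (m.choose k : K)) = if m = 0 then 1 else 0 := by
  have h := Int.alternating_sum_range_choose (n := m)
  have h2 := congrArg (fun z : ℤ => (z : K)) h
  push_cast at h2
  first
  | exact h2
  | (rw [h2]; split_ifs <;> simp)

include hleib hdx

lemma prR_ker_mul_pow {c : A} (hc : d c = 0) {m : ℕ} (hm : m < p) :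
    prR p d x (c * x ^ m) = if m = 0 then c else 0 := by
  rw [prR_apply]
  have hterm : ∀ k ∈ range p, cK K k • ((d^k) (c * x^m) * x^k)
      = if k ≤ m then ((-1:K)^k * (m.choose k : K)) • (c * x^m) else 0 := by
    intro k hk
    rw [deriv_ker_mul_pow hleib hdx hc]
    by_cases hkm : k ≤ m
    · rw [if_pos hkm, smul_mul_assoc, smul_smul, mul_assoc, ← pow_add,
        Nat.sub_add_cancel hkm]
      congr 1
      rw [cK, Nat.descFactorial_eq_factorial_mul_choose]
      have h1 : ((k.factorial : K)) ≠ 0 := fact_ne_zero hp (by omega)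
      push_cast
      field_simp
    · rw [if_neg hkm, Nat.descFactorial_eq_zero_iff_lt.mpr (by omega)]
      simp
  rw [Finset.sum_congr rfl hterm,
    ← Finset.sum_subset (Finset.range_subset_range.mpr (by omega : m + 1 ≤ p))
      (fun k hk1 hk2 => if_neg (by simp only [Finset.mem_range] at hk1 hk2; omega))]
  rw [Finset.sum_congr rfl
    (fun k hk => if_pos (by simp only [Finset.mem_range] at hk; omega)),
    ← Finset.sum_smul, alt_sum_K hp]
  split_ifs with h
  · subst h; simp
  · simp

lemma prL_pow_mul_ker {c : A} (hc : d c = 0) {m : ℕ} (hm : m < p) :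
    prL p d x (x ^ m * c) = if m = 0 then c else 0 := by
  rw [prL_apply]
  have hterm : ∀ k ∈ range p, cK K k • (x^k * (d^k) (x^m * c))
      = if k ≤ m then ((-1:K)^k * (m.choose k : K)) • (x^m * c) else 0 := by
    intro k hk
    rw [deriv_pow_mul_ker hleib hdx hc]
    by_cases hkm : k ≤ m
    · rw [if_pos hkm, mul_smul_comm, smul_smul, ← mul_assoc, ← pow_add,
        ← Nat.add_sub_assoc hkm, Nat.add_sub_cancel_left]
      congr 1
      rw [cK, Nat.descFactorial_eq_factorial_mul_choose]
      have h1 : ((k.factorial : K)) ≠ 0 := fact_ne_zero hp (by omega)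
      push_cast
      field_simp
    · rw [if_neg hkm, Nat.descFactorial_eq_zero_iff_lt.mpr (by omega)]
      simp
  rw [Finset.sum_congr rfl hterm,
    ← Finset.sum_subset (Finset.range_subset_range.mpr (by omega : m + 1 ≤ p))
      (fun k hk1 hk2 => if_neg (by simp only [Finset.mem_range] at hk1 hk2; omega))]
  rw [Finset.sum_congr rfl
    (fun k hk => if_pos (by simp only [Finset.mem_range] at hk; omega)),
    ← Finset.sum_smul, alt_sum_K hp]
  split_ifs with h
  · subst h; simp
  · simp


variable (hnil : d ^ p = 0)
include hnil

lemma deriv_prR (a : A) : d (prR p d x a) = 0 := by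
  obtain ⟨q, hq⟩ : ∃ q, p = q + 1 := ⟨p - 1, by have := hp.pos; omega⟩
  rw [prR_apply, map_sum]
  have hterm : ∀ k ∈ range p, d (cK K k • ((d^k) a * x^k))
      = cK K k • (d ((d^k) a) * x^k) + (cK K k * ((k:ℕ):K)) • ((d^k) a * x^(k-1)) := by
    intro k _
    rw [map_smul, hleib, deriv_x_pow hleib hdx, mul_smul_comm, smul_add, smul_smul]
  rw [Finset.sum_congr rfl hterm, Finset.sum_add_distrib, hq,
    Finset.sum_range_succ, Finset.sum_range_succ']
  have hlast : d ((d^q) a) = 0 := by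
    have h : d ((d^q) a) = (d^(q+1)) a := by rw [pow_succ', Module.End.mul_apply]
    rw [h, ← hq, hnil]; rfl
  rw [hlast]
  simp only [zero_mul, smul_zero, add_zero, Nat.cast_zero, mul_zero, zero_smul]
  rw [← Finset.sum_add_distrib]
  apply Finset.sum_eq_zero
  intro k hk
  rw [Finset.mem_range] at hk
  have h1 : d ((d^k) a) = (d^(k+1)) a := by rw [pow_succ', Module.End.mul_apply]
  have h2 : cK K (k+1) * ((k+1 : ℕ) : K) = - cK K k := cK_succ hp (by omega)
  have h3 : k + 1 - 1 = k := rfl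
  rw [h1, h2, h3, neg_smul, add_neg_cancel]

lemma deriv_prL (a : A) : d (prL p d x a) = 0 := by
  obtain ⟨q, hq⟩ : ∃ q, p = q + 1 := ⟨p - 1, by have := hp.pos; omega⟩
  rw [prL_apply, map_sum]
  have hterm : ∀ k ∈ range p, d (cK K k • (x^k * (d^k) a))
      = cK K k • (x^k * d ((d^k) a)) + (cK K k * ((k:ℕ):K)) • (x^(k-1) * (d^k) a) := by
    intro k _
    rw [map_smul, hleib, deriv_x_pow hleib hdx, smul_mul_assoc, smul_add, smul_smul,
      add_comm]
  rw [Finset.sum_congr rfl hterm, Finset.sum_add_distrib, hq,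
    Finset.sum_range_succ, Finset.sum_range_succ']
  have hlast : d ((d^q) a) = 0 := by
    have h : d ((d^q) a) = (d^(q+1)) a := by rw [pow_succ', Module.End.mul_apply]
    rw [h, ← hq, hnil]; rfl
  rw [hlast]
  simp only [mul_zero, smul_zero, add_zero, Nat.cast_zero, zero_smul]
  rw [← Finset.sum_add_distrib]
  apply Finset.sum_eq_zero
  intro k hk
  rw [Finset.mem_range] at hk
  have h1 : d ((d^k) a) = (d^(k+1)) a := by rw [pow_succ', Module.End.mul_apply]
  have h2 : cK K (k+1) * ((k+1 : ℕ) : K) = - cK K k := cK_succ hp (by omega)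
  have h3 : k + 1 - 1 = k := rfl
  rw [h1, h2, h3, neg_smul, add_neg_cancel]

lemma deriv_RrOp (k : ℕ) (a : A) : d (RrOp p d x k a) = 0 := by
  rw [RrOp_apply, map_smul, deriv_prR hleib hdx hp hnil, smul_zero]

lemma deriv_RlOp (k : ℕ) (a : A) : d (RlOp p d x k a) = 0 := by
  rw [RlOp_apply, map_smul, deriv_prL hleib hdx hp hnil, smul_zero]

omit hnil

lemma RrOp_ker_mul_pow {c : A} (hc : d c = 0) {k m : ℕ} (hk : k < p) (hm : m < p) :
    RrOp p d x k (c * x ^ m) = if m = k then c else 0 := by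
  rw [RrOp_apply, deriv_ker_mul_pow hleib hdx hc, map_smul, smul_smul]
  rcases lt_trichotomy k m with h | h | h
  · rw [prR_ker_mul_pow hleib hdx hp hc (show m - k < p by omega),
      if_neg (by omega : ¬ m - k = 0), smul_zero, if_neg (by omega : ¬ m = k)]
  · subst h
    rw [Nat.sub_self, prR_ker_mul_pow hleib hdx hp hc (show 0 < p by omega),
      if_pos rfl, if_pos rfl, Nat.descFactorial_self,
      inv_mul_cancel₀ (fact_ne_zero hp hk), one_smul]
  · rw [Nat.descFactorial_eq_zero_iff_lt.mpr h, Nat.cast_zero, mul_zero, zero_smul,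
      if_neg (by omega : ¬ m = k)]

lemma RlOp_pow_mul_ker {c : A} (hc : d c = 0) {k m : ℕ} (hk : k < p) (hm : m < p) :
    RlOp p d x k (x ^ m * c) = if m = k then c else 0 := by
  rw [RlOp_apply, deriv_pow_mul_ker hleib hdx hc, map_smul, smul_smul]
  rcases lt_trichotomy k m with h | h | h
  · rw [prL_pow_mul_ker hleib hdx hp hc (show m - k < p by omega),
      if_neg (by omega : ¬ m - k = 0), smul_zero, if_neg (by omega : ¬ m = k)]
  · subst h
    rw [Nat.sub_self, prL_pow_mul_ker hleib hdx hp hc (show 0 < p by omega),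
      if_pos rfl, if_pos rfl, Nat.descFactorial_self,
      inv_mul_cancel₀ (fact_ne_zero hp hk), one_smul]
  · rw [Nat.descFactorial_eq_zero_iff_lt.mpr h, Nat.cast_zero, mul_zero, zero_smul,
      if_neg (by omega : ¬ m = k)]


omit hleib hdx
lemma coeff_sum (m : ℕ) (hm : m < p) :
    (∑ k ∈ range (m+1), ((k.factorial : K))⁻¹ * cK K (m-k)) = if m = 0 then 1 else 0 := by
  have e1 : ∀ k ∈ Finset.range (m+1),
      ((k.factorial : K))⁻¹ * cK K (m-k)
        = (fun j => (-1:K)^j * (m.choose (m - j) : K) * ((m.factorial : K))⁻¹) (m - k) := by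
    intro k hk
    rw [Finset.mem_range] at hk
    have h := inv_fact_mul_inv_fact (K := K) hp hm (show k ≤ m by omega)
    simp only [cK]
    have h2 : m - (m - k) = k := by omega
    rw [h2]
    linear_combination ((-1:K)^(m-k)) * h
  rw [Finset.sum_congr rfl e1]
  have e3 := Finset.sum_range_reflect
    (fun j => (-1:K)^j * (m.choose (m - j) : K) * ((m.factorial : K))⁻¹) (m+1)
  simp only [Nat.add_sub_cancel, Nat.succ_sub_one] at e3
  rw [e3]
  have e4 : ∀ k ∈ Finset.range (m+1),
      (-1:K)^k * (m.choose (m - k) : K) * ((m.factorial : K))⁻¹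
        = ((-1:K)^k * (m.choose k : K)) * ((m.factorial : K))⁻¹ := by
    intro k hk
    rw [Finset.mem_range] at hk
    rw [Nat.choose_symm (show k ≤ m by omega)]
  rw [Finset.sum_congr rfl e4, ← Finset.sum_mul, alt_sum_K hp]
  split_ifs with h
  · subst h; simp
  · rw [zero_mul]

include hleib hdx
variable (hnil : d ^ p = 0)
include hnil

lemma sum_RrOp (a : A) : ∑ k ∈ range p, RrOp p d x k a * x ^ k = a := by
  have hzero : ∀ m : ℕ, p ≤ m → (d^m) a = 0 := by
    intro m hm
    have h : d ^ m = d ^ (m - p) * d ^ p := by rw [← pow_add]; congr 1; omega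
    rw [h, Module.End.mul_apply, hnil]; simp
  have step1 : ∀ k ∈ range p, RrOp p d x k a * x ^ k
      = ∑ j ∈ range p,
          (((k.factorial : K))⁻¹ * cK K j) • ((d^(j+k)) a * x^(j+k)) := by
    intro k _
    rw [RrOp_apply, prR_apply, smul_mul_assoc, Finset.sum_mul, Finset.smul_sum]
    refine Finset.sum_congr rfl fun j _ => ?_
    rw [smul_mul_assoc, smul_smul, pow_add d, Module.End.mul_apply, pow_add x, mul_assoc]
  rw [Finset.sum_congr rfl step1]
  rw [← Finset.sum_product' (range p) (range p)
    (fun k j => (((k.factorial : K))⁻¹ * cK K j) • ((d^(j+k)) a * x^(j+k)))]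
  rw [← Finset.sum_filter_of_ne
    (s := range p ×ˢ range p) (p := fun z => z.2 + z.1 < p)
    (f := fun z => (((z.1.factorial : K))⁻¹ * cK K z.2) • ((d^(z.2+z.1)) a * x^(z.2+z.1)))
    (by
      intro z hz hne
      by_contra hlt
      exact hne (by simp only [hzero _ (by omega : p ≤ z.2 + z.1), zero_mul, smul_zero]))]
  have hset : (range p ×ˢ range p).filter (fun z => z.2 + z.1 < p)
      = (range p).biUnion (fun m => Finset.HasAntidiagonal.antidiagonal m) := by
    ext z
    simp only [Finset.mem_filter, Finset.mem_product, Finset.mem_range,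
      Finset.mem_biUnion, Finset.HasAntidiagonal.mem_antidiagonal]
    constructor
    · rintro ⟨⟨h1, h2⟩, h3⟩; exact ⟨z.1+z.2, by omega, rfl⟩
    · rintro ⟨m, hm, hz⟩; omega
  rw [hset, Finset.sum_biUnion (by
    intro m hm m' hm' hne
    simp only [Finset.disjoint_left, Finset.HasAntidiagonal.mem_antidiagonal]
    intro z h1 h2
    exact hne (by omega))]
  have step2 : ∀ m ∈ range p,
      (∑ z ∈ Finset.HasAntidiagonal.antidiagonal m,
        (((z.1.factorial : K))⁻¹ * cK K z.2) • ((d^(z.2+z.1)) a * x^(z.2+z.1)))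
      = (if m = 0 then (1:K) else 0) • ((d^m) a * x^m) := by
    intro m hm
    rw [Finset.mem_range] at hm
    rw [Finset.Nat.sum_antidiagonal_eq_sum_range_succ_mk]
    have e : ∀ k ∈ Finset.range (m+1),
        (((k.factorial : K))⁻¹ * cK K (m-k)) • ((d^((m-k)+k)) a * x^((m-k)+k))
          = (((k.factorial : K))⁻¹ * cK K (m-k)) • ((d^m) a * x^m) := by
      intro k hk
      rw [Finset.mem_range] at hk
      have h : m - k + k = m := by omega
      rw [h]
    rw [Finset.sum_congr rfl e, ← Finset.sum_smul, coeff_sum hp m hm]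
  rw [Finset.sum_congr rfl step2]
  have e5 : ∀ m ∈ range p, (if m = 0 then (1:K) else 0) • ((d^m) a * x^m)
      = if m = 0 then ((d^m) a * x^m) else 0 := by
    intro m _
    split_ifs <;> simp
  rw [Finset.sum_congr rfl e5, Finset.sum_ite_eq' (range p) 0]
  rw [if_pos (Finset.mem_range.mpr hp.pos)]
  simp

lemma sum_RlOp (a : A) : ∑ k ∈ range p, x ^ k * RlOp p d x k a = a := by
  have hzero : ∀ m : ℕ, p ≤ m → (d^m) a = 0 := by
    intro m hm
    have h : d ^ m = d ^ (m - p) * d ^ p := by rw [← pow_add]; congr 1; omega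
    rw [h, Module.End.mul_apply, hnil]; simp
  have step1 : ∀ k ∈ range p, x ^ k * RlOp p d x k a
      = ∑ j ∈ range p,
          (((k.factorial : K))⁻¹ * cK K j) • (x^(j+k) * (d^(j+k)) a) := by
    intro k _
    rw [RlOp_apply, prL_apply, mul_smul_comm, Finset.mul_sum, Finset.smul_sum]
    refine Finset.sum_congr rfl fun j _ => ?_
    rw [mul_smul_comm, smul_smul, pow_add d, Module.End.mul_apply, pow_add x, ← mul_assoc,
      ← pow_add, Nat.add_comm k j, pow_add]
  rw [Finset.sum_congr rfl step1]
  rw [← Finset.sum_product' (range p) (range p)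
    (fun k j => (((k.factorial : K))⁻¹ * cK K j) • (x^(j+k) * (d^(j+k)) a))]
  rw [← Finset.sum_filter_of_ne
    (s := range p ×ˢ range p) (p := fun z => z.2 + z.1 < p)
    (f := fun z => (((z.1.factorial : K))⁻¹ * cK K z.2) • (x^(z.2+z.1) * (d^(z.2+z.1)) a))
    (by
      intro z hz hne
      by_contra hlt
      exact hne (by simp only [hzero _ (by omega : p ≤ z.2 + z.1), mul_zero, smul_zero]))]
  have hset : (range p ×ˢ range p).filter (fun z => z.2 + z.1 < p)
      = (range p).biUnion (fun m => Finset.HasAntidiagonal.antidiagonal m) := by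
    ext z
    simp only [Finset.mem_filter, Finset.mem_product, Finset.mem_range,
      Finset.mem_biUnion, Finset.HasAntidiagonal.mem_antidiagonal]
    constructor
    · rintro ⟨⟨h1, h2⟩, h3⟩; exact ⟨z.1+z.2, by omega, rfl⟩
    · rintro ⟨m, hm, hz⟩; omega
  rw [hset, Finset.sum_biUnion (by
    intro m hm m' hm' hne
    simp only [Finset.disjoint_left, Finset.HasAntidiagonal.mem_antidiagonal]
    intro z h1 h2
    exact hne (by omega))]
  have step2 : ∀ m ∈ range p,
      (∑ z ∈ Finset.HasAntidiagonal.antidiagonal m,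
        (((z.1.factorial : K))⁻¹ * cK K z.2) • (x^(z.2+z.1) * (d^(z.2+z.1)) a))
      = (if m = 0 then (1:K) else 0) • (x^m * (d^m) a) := by
    intro m hm
    rw [Finset.mem_range] at hm
    rw [Finset.Nat.sum_antidiagonal_eq_sum_range_succ_mk]
    have e : ∀ k ∈ Finset.range (m+1),
        (((k.factorial : K))⁻¹ * cK K (m-k)) • (x^((m-k)+k) * (d^((m-k)+k)) a)
          = (((k.factorial : K))⁻¹ * cK K (m-k)) • (x^m * (d^m) a) := by
      intro k hk
      rw [Finset.mem_range] at hk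
      have h : m - k + k = m := by omega
      rw [h]
    rw [Finset.sum_congr rfl e, ← Finset.sum_smul, coeff_sum hp m hm]
  rw [Finset.sum_congr rfl step2]
  have e5 : ∀ m ∈ range p, (if m = 0 then (1:K) else 0) • (x^m * (d^m) a)
      = if m = 0 then (x^m * (d^m) a) else 0 := by
    intro m _
    split_ifs <;> simp
  rw [Finset.sum_congr rfl e5, Finset.sum_ite_eq' (range p) 0]
  rw [if_pos (Finset.mem_range.mpr hp.pos)]
  simp

end WithChar

section CommuteLemmas
omit hleib hdx

lemma commute_RrOp {e : Module.End K A} (he1 : ∀ b, e (d b) = d (e b))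
    (he2 : ∀ b, e (b * x) = e b * x) (k : ℕ) (a : A) :
    e (RrOp p d x k a) = RrOp p d x k (e a) := by
  have hd : ∀ (j : ℕ) (b : A), e ((d^j) b) = (d^j) (e b) := by
    intro j
    induction j with
    | zero => intro b; simp
    | succ n ih => intro b; rw [pow_succ', Module.End.mul_apply, Module.End.mul_apply, he1, ih]
  have hxp : ∀ (j : ℕ) (b : A), e (b * x^j) = e b * x^j := by
    intro j
    induction j with
    | zero => intro b; simp
    | succ n ih => intro b; rw [pow_succ, ← mul_assoc, he2, ih, mul_assoc]
  rw [RrOp_apply, RrOp_apply, map_smul, prR_apply, prR_apply, map_sum]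
  refine congrArg _ (Finset.sum_congr rfl fun j _ => ?_)
  rw [map_smul, hxp, hd, hd]

lemma commute_RlOp {e : Module.End K A} (he1 : ∀ b, e (d b) = d (e b))
    (he2 : ∀ b, e (x * b) = x * e b) (k : ℕ) (a : A) :
    e (RlOp p d x k a) = RlOp p d x k (e a) := by
  have hd : ∀ (j : ℕ) (b : A), e ((d^j) b) = (d^j) (e b) := by
    intro j
    induction j with
    | zero => intro b; simp
    | succ n ih => intro b; rw [pow_succ', Module.End.mul_apply, Module.End.mul_apply, he1, ih]
  have hxp : ∀ (j : ℕ) (b : A), e (x^j * b) = x^j * e b := by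
    intro j
    induction j with
    | zero => intro b; simp
    | succ n ih => intro b; rw [pow_succ', mul_assoc, he2, ih, ← mul_assoc]
  rw [RlOp_apply, RlOp_apply, map_smul, prL_apply, prL_apply, map_sum]
  refine congrArg _ (Finset.sum_congr rfl fun j _ => ?_)
  rw [map_smul, hxp, hd, hd]

end CommuteLemmas
end SingleVar

section MultiVar
variable {K A : Type*} [Field K] [Ring A] [Algebra K A]
variable {p : ℕ}

lemma deriv_list_prod {d : Module.End K A}
    (hleib : ∀ a b : A, d (a * b) = d a * b + a * d b) :
    ∀ l : List A, (∀ a ∈ l, d a = 0) → d l.prod = 0 := by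
  intro l
  induction l with
  | nil => intro _; simpa using deriv_one_leib hleib
  | cons y t ih =>
    intro h
    rw [List.prod_cons, hleib, h y (List.mem_cons_self (a := y) (l := t)),
      ih (fun a ha => h a (List.mem_cons_of_mem _ ha)), zero_mul, mul_zero, add_zero]

theorem auxR (hp : p.Prime) [CharP K p] (n : ℕ) :
    ∀ (δ : Fin n → Module.End K A)
    (_ : ∀ i, ∀ a b : A, δ i (a * b) = δ i a * b + a * δ i b)
    (_ : ∀ i j a, δ i (δ j a) = δ j (δ i a))
    (_ : ∀ i, (δ i) ^ p = 0)
    (x : Fin n → A)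
    (_ : ∀ i j, δ i (x j) = if i = j then 1 else 0),
    ∃ Q : (Fin n → Fin p) → Module.End K A,
      (∀ α i a, δ i (Q α a) = 0) ∧
      (∀ a, ∑ α : Fin n → Fin p,
        (Q α a) * (List.ofFn fun i => x i ^ ((α i : ℕ))).prod = a) ∧
      (∀ (α β : Fin n → Fin p) (c : A), (∀ i, δ i c = 0) →
        Q α (c * (List.ofFn fun i => x i ^ ((β i : ℕ))).prod) = if β = α then c else 0) ∧
      (∀ (e : Module.End K A), (∀ i b, e (δ i b) = δ i (e b)) →
        (∀ i b, e (b * x i) = e b * x i) → ∀ α a, e (Q α a) = Q α (e a)) := by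
  induction n with
  | zero =>
    intro δ hleib hcomm hnil x hx
    refine ⟨fun _ => 1, fun α i => i.elim0, ?_, ?_, ?_⟩
    · intro a
      rw [Fintype.sum_unique]
      simp
    · intro α β c hc
      rw [if_pos (Subsingleton.elim β α)]
      simp
    · intro e he1 he2 α a
      simp
  | succ n ih =>
    intro δ hleib hcomm hnil x hx
    obtain ⟨Q', h1, h2, h3, h4⟩ := ih (fun i => δ i.succ) (fun i => hleib i.succ)
      (fun i j a => hcomm i.succ j.succ a) (fun i => hnil i.succ) (fun i => x i.succ)
      (fun i j => by rw [hx i.succ j.succ]; simp [Fin.succ_inj])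
    have hleib0 := hleib 0
    have hdx0 : δ 0 (x 0) = 1 := by rw [hx 0 0, if_pos rfl]
    have hnil0 := hnil 0
    refine ⟨fun α => RrOp p (δ 0) (x 0) ((α 0 : ℕ)) ∘ₗ Q' (fun i => α i.succ),
      ?_, ?_, ?_, ?_⟩
    · intro α i a
      simp only [LinearMap.comp_apply]
      refine Fin.cases ?_ (fun j => ?_) i
      · exact deriv_RrOp hleib0 hdx0 hp hnil0 _ _
      · have he1 : ∀ b, δ j.succ (δ 0 b) = δ 0 (δ j.succ b) := fun b => hcomm _ _ b
        have he2 : ∀ b, δ j.succ (b * x 0) = δ j.succ b * x 0 := by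
          intro b
          rw [hleib j.succ, hx j.succ 0, if_neg (Fin.succ_ne_zero j), mul_zero, add_zero]
        rw [commute_RrOp (p := p) (d := δ 0) (x := x 0) (e := δ j.succ) he1 he2, h1 _ j _, map_zero]
    · intro a
      have hprod : ∀ α : Fin (n+1) → Fin p,
          (List.ofFn fun i => x i ^ ((α i : ℕ))).prod
            = x 0 ^ ((α 0 : ℕ))
              * (List.ofFn fun i => x i.succ ^ ((α i.succ : ℕ))).prod := by
        intro α
        rw [List.ofFn_succ, List.prod_cons]
      have key := Fintype.sum_equiv (Fin.consEquiv (fun _ : Fin (n+1) => Fin p))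
        (fun z : Fin p × (Fin n → Fin p) =>
          RrOp p (δ 0) (x 0) ((z.1 : ℕ)) (Q' z.2 a)
            * (x 0 ^ ((z.1 : ℕ)) * (List.ofFn fun i => x i.succ ^ ((z.2 i : ℕ))).prod))
        (fun α => (RrOp p (δ 0) (x 0) ((α 0 : ℕ)) ∘ₗ Q' (fun i => α i.succ)) a
            * (List.ofFn fun i => x i ^ ((α i : ℕ))).prod)
        (fun z => by
          obtain ⟨k, t⟩ := z
          simp only [LinearMap.comp_apply, Fin.consEquiv_apply, Fin.cons_zero,
            Fin.cons_succ, hprod])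
      rw [← key, Fintype.sum_prod_type]
      have inner : ∀ t : Fin n → Fin p,
          ∑ k : Fin p, RrOp p (δ 0) (x 0) ((k : ℕ)) (Q' t a) * x 0 ^ ((k : ℕ))
            = Q' t a := by
        intro t
        rw [Fin.sum_univ_eq_sum_range
          (fun m => RrOp p (δ 0) (x 0) m (Q' t a) * x 0 ^ m) p]
        exact sum_RrOp hleib0 hdx0 hp hnil0 (Q' t a)
      rw [Finset.sum_comm]
      have e2 : ∀ t : Fin n → Fin p,
          (∑ k : Fin p, RrOp p (δ 0) (x 0) ((k : ℕ)) (Q' t a)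
            * (x 0 ^ ((k : ℕ)) * (List.ofFn fun i => x i.succ ^ ((t i : ℕ))).prod))
          = Q' t a * (List.ofFn fun i => x i.succ ^ ((t i : ℕ))).prod := by
        intro t
        calc (∑ k : Fin p, RrOp p (δ 0) (x 0) ((k : ℕ)) (Q' t a)
            * (x 0 ^ ((k : ℕ)) * (List.ofFn fun i => x i.succ ^ ((t i : ℕ))).prod))
            = ∑ k : Fin p, (RrOp p (δ 0) (x 0) ((k : ℕ)) (Q' t a) * x 0 ^ ((k : ℕ)))
              * (List.ofFn fun i => x i.succ ^ ((t i : ℕ))).prod :=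
            Finset.sum_congr rfl (fun k _ => (mul_assoc _ _ _).symm)
          _ = (∑ k : Fin p, RrOp p (δ 0) (x 0) ((k : ℕ)) (Q' t a) * x 0 ^ ((k : ℕ)))
              * (List.ofFn fun i => x i.succ ^ ((t i : ℕ))).prod :=
            (Finset.sum_mul _ _ _).symm
          _ = Q' t a * (List.ofFn fun i => x i.succ ^ ((t i : ℕ))).prod := by
            rw [inner t]
      rw [Finset.sum_congr rfl (fun t _ => e2 t)]
      exact h2 a
    · intro α β c hc
      have hc' : ∀ i : Fin n, δ i.succ (c * x 0 ^ ((β 0 : ℕ))) = 0 := by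
        intro i
        rw [hleib i.succ, hc i.succ, zero_mul, zero_add,
          deriv_pow_ker (hleib i.succ)
            (by rw [hx i.succ 0, if_neg (Fin.succ_ne_zero i)]) _, mul_zero]
      simp only [LinearMap.comp_apply, List.ofFn_succ, List.prod_cons]
      rw [← mul_assoc, h3 (fun i => α i.succ) (fun i => β i.succ) _ hc']
      by_cases htail : (fun i : Fin n => β i.succ) = (fun i : Fin n => α i.succ)
      · rw [if_pos htail,
          RrOp_ker_mul_pow hleib0 hdx0 hp (hc 0) (Fin.is_lt _) (Fin.is_lt _)]
        by_cases h0 : β 0 = α 0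
        · have hβα : β = α := funext fun (i : Fin (n+1)) =>
            Fin.cases h0 (fun j => congrFun htail j) i
          rw [if_pos (by rw [h0]), if_pos hβα]
        · rw [if_neg (fun hv => h0 ((Fin.val_eq_val _ _).mp hv)),
            if_neg (fun hβα => h0 (congrFun hβα 0))]
      · rw [if_neg htail, map_zero,
          if_neg (fun hβα => htail (funext fun (i : Fin n) => congrFun hβα i.succ))]
    · intro e he1 he2 α a
      simp only [LinearMap.comp_apply]
      rw [commute_RrOp (p := p) (d := δ 0) (x := x 0) (e := e) (he1 0) (he2 0),
        h4 e (fun i b => he1 i.succ b) (fun i b => he2 i.succ b)]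

theorem auxL (hp : p.Prime) [CharP K p] (n : ℕ) :
    ∀ (δ : Fin n → Module.End K A)
    (_ : ∀ i, ∀ a b : A, δ i (a * b) = δ i a * b + a * δ i b)
    (_ : ∀ i j a, δ i (δ j a) = δ j (δ i a))
    (_ : ∀ i, (δ i) ^ p = 0)
    (x : Fin n → A)
    (_ : ∀ i j, δ i (x j) = if i = j then 1 else 0),
    ∃ Q : (Fin n → Fin p) → Module.End K A,
      (∀ α i a, δ i (Q α a) = 0) ∧
      (∀ a, ∑ α : Fin n → Fin p,
        (List.ofFn fun i => x i ^ ((α i : ℕ))).prod * (Q α a) = a) ∧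
      (∀ (α β : Fin n → Fin p) (c : A), (∀ i, δ i c = 0) →
        Q α ((List.ofFn fun i => x i ^ ((β i : ℕ))).prod * c) = if β = α then c else 0) ∧
      (∀ (e : Module.End K A), (∀ i b, e (δ i b) = δ i (e b)) →
        (∀ i b, e (x i * b) = x i * e b) → ∀ α a, e (Q α a) = Q α (e a)) := by
  induction n with
  | zero =>
    intro δ hleib hcomm hnil x hx
    refine ⟨fun _ => 1, fun α i => i.elim0, ?_, ?_, ?_⟩
    · intro a
      rw [Fintype.sum_unique]
      simp
    · intro α β c hc
      rw [if_pos (Subsingleton.elim β α)]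
      simp
    · intro e he1 he2 α a
      simp
  | succ n ih =>
    intro δ hleib hcomm hnil x hx
    obtain ⟨Q', h1, h2, h3, h4⟩ := ih (fun i => δ i.succ) (fun i => hleib i.succ)
      (fun i j a => hcomm i.succ j.succ a) (fun i => hnil i.succ) (fun i => x i.succ)
      (fun i j => by rw [hx i.succ j.succ]; simp [Fin.succ_inj])
    have hleib0 := hleib 0
    have hdx0 : δ 0 (x 0) = 1 := by rw [hx 0 0, if_pos rfl]
    have hnil0 := hnil 0
    refine ⟨fun α => Q' (fun i => α i.succ) ∘ₗ RlOp p (δ 0) (x 0) ((α 0 : ℕ)),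
      ?_, ?_, ?_, ?_⟩
    · intro α i a
      simp only [LinearMap.comp_apply]
      refine Fin.cases ?_ (fun j => ?_) i
      · have he1 : ∀ (i : Fin n) (b : A), δ 0 (δ i.succ b) = δ i.succ (δ 0 b) :=
          fun i b => hcomm 0 i.succ b
        have he2 : ∀ (i : Fin n) (b : A), δ 0 (x i.succ * b) = x i.succ * δ 0 b := by
          intro i b
          rw [hleib 0, hx 0 i.succ, if_neg (Ne.symm (Fin.succ_ne_zero i)),
            zero_mul, zero_add]
        rw [h4 (δ 0) he1 he2, deriv_RlOp hleib0 hdx0 hp hnil0, map_zero]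
      · exact h1 _ j _
    · intro a
      have hprod : ∀ α : Fin (n+1) → Fin p,
          (List.ofFn fun i => x i ^ ((α i : ℕ))).prod
            = x 0 ^ ((α 0 : ℕ))
              * (List.ofFn fun i => x i.succ ^ ((α i.succ : ℕ))).prod := by
        intro α
        rw [List.ofFn_succ, List.prod_cons]
      have key := Fintype.sum_equiv (Fin.consEquiv (fun _ : Fin (n+1) => Fin p))
        (fun z : Fin p × (Fin n → Fin p) =>
          (x 0 ^ ((z.1 : ℕ)) * (List.ofFn fun i => x i.succ ^ ((z.2 i : ℕ))).prod)
            * Q' z.2 (RlOp p (δ 0) (x 0) ((z.1 : ℕ)) a))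
        (fun α => (List.ofFn fun i => x i ^ ((α i : ℕ))).prod
            * ((Q' (fun i => α i.succ) ∘ₗ RlOp p (δ 0) (x 0) ((α 0 : ℕ))) a))
        (fun z => by
          obtain ⟨k, t⟩ := z
          simp only [LinearMap.comp_apply, Fin.consEquiv_apply, Fin.cons_zero,
            Fin.cons_succ, hprod])
      rw [← key, Fintype.sum_prod_type]
      have e2 : ∀ k : Fin p,
          (∑ t : Fin n → Fin p,
            (x 0 ^ ((k : ℕ)) * (List.ofFn fun i => x i.succ ^ ((t i : ℕ))).prod)
              * Q' t (RlOp p (δ 0) (x 0) ((k : ℕ)) a))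
          = x 0 ^ ((k : ℕ)) * RlOp p (δ 0) (x 0) ((k : ℕ)) a := by
        intro k
        calc (∑ t : Fin n → Fin p,
            (x 0 ^ ((k : ℕ)) * (List.ofFn fun i => x i.succ ^ ((t i : ℕ))).prod)
              * Q' t (RlOp p (δ 0) (x 0) ((k : ℕ)) a))
            = ∑ t : Fin n → Fin p, x 0 ^ ((k : ℕ))
              * ((List.ofFn fun i => x i.succ ^ ((t i : ℕ))).prod
                * Q' t (RlOp p (δ 0) (x 0) ((k : ℕ)) a)) :=
            Finset.sum_congr rfl (fun t _ => mul_assoc _ _ _)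
          _ = x 0 ^ ((k : ℕ)) * ∑ t : Fin n → Fin p,
              ((List.ofFn fun i => x i.succ ^ ((t i : ℕ))).prod
                * Q' t (RlOp p (δ 0) (x 0) ((k : ℕ)) a)) :=
            (Finset.mul_sum _ _ _).symm
          _ = x 0 ^ ((k : ℕ)) * RlOp p (δ 0) (x 0) ((k : ℕ)) a := by
            rw [h2 (RlOp p (δ 0) (x 0) ((k : ℕ)) a)]
      rw [Finset.sum_congr rfl (fun k _ => e2 k),
        Fin.sum_univ_eq_sum_range (fun m => x 0 ^ m * RlOp p (δ 0) (x 0) m a) p]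
      exact sum_RlOp hleib0 hdx0 hp hnil0 a
    · intro α β c hc
      have hker : δ 0 ((List.ofFn fun i => x i.succ ^ ((β i.succ : ℕ))).prod) = 0 := by
        refine deriv_list_prod hleib0 _ ?_
        intro a ha
        rw [List.mem_ofFn] at ha
        obtain ⟨i, rfl⟩ := ha
        exact deriv_pow_ker hleib0
          (by rw [hx 0 i.succ, if_neg (Ne.symm (Fin.succ_ne_zero i))]) _
      have hc' : δ 0 ((List.ofFn fun i => x i.succ ^ ((β i.succ : ℕ))).prod * c) = 0 := by
        rw [hleib0, hker, hc 0, zero_mul, mul_zero, add_zero]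
      simp only [LinearMap.comp_apply, List.ofFn_succ, List.prod_cons]
      rw [mul_assoc, RlOp_pow_mul_ker hleib0 hdx0 hp hc' (Fin.is_lt _) (Fin.is_lt _)]
      by_cases h0 : β 0 = α 0
      · rw [if_pos (by rw [h0]),
          h3 (fun i => α i.succ) (fun i => β i.succ) c (fun i => hc i.succ)]
        by_cases htail : (fun i : Fin n => β i.succ) = (fun i : Fin n => α i.succ)
        · have hβα : β = α := funext fun (i : Fin (n+1)) =>
            Fin.cases h0 (fun j => congrFun htail j) i
          rw [if_pos htail, if_pos hβα]
        · rw [if_neg htail,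
            if_neg (fun hβα => htail (funext fun (i : Fin n) => congrFun hβα i.succ))]
      · rw [if_neg (fun hv => h0 ((Fin.val_eq_val _ _).mp hv)), map_zero,
          if_neg (fun hβα => h0 (congrFun hβα 0))]
    · intro e he1 he2 α a
      simp only [LinearMap.comp_apply]
      rw [h4 e (fun i b => he1 i.succ b) (fun i b => he2 i.succ b),
        commute_RlOp (p := p) (d := δ 0) (x := x 0) (e := e) (he1 0) (he2 0)]

end MultiVar



/-- Suppose `char K = p > 0`, `δ 0, …, δ (n-1)` are pairwise commuting
`K`-derivations of `A` with `(δ i)^p = 0`, and `x 0, …, x (n-1) ∈ A` satisfy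
`δ i (x j) = δ_{ij}` (Kronecker delta).  Then, with `A^δ := ∩ᵢ ker (δ i)` and
`x^α := (x 0)^{α 0} ⋯ (x (n-1))^{α (n-1)}` (ordered product),
`A = ⊕_{α ∈ {0,…,p-1}^n} A^δ·x^α = ⊕_{α} x^α·A^δ` as internal direct sums of
`K`-subspaces. -/
theorem stmt_10 {K A : Type*} [Field K] [Ring A] [Algebra K A]
    (p : ℕ) (hp : p.Prime) (hcharK : CharP K p)
    (n : ℕ) (δ : Fin n → Module.End K A)
    (hleib : ∀ i, ∀ a b : A, δ i (a * b) = δ i a * b + a * δ i b)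
    (hcomm : ∀ i j, Commute (δ i) (δ j))
    (hnil : ∀ i, (δ i) ^ p = 0)
    (x : Fin n → A)
    (hx : ∀ i j, δ i (x j) = if i = j then 1 else 0) :
    iSupIndep (fun α : Fin n → Fin p =>
      (⨅ i, ker (δ i)).map
        (mulRight K ((List.ofFn fun i => x i ^ ((α i : ℕ))).prod))) ∧
    (⨆ α : Fin n → Fin p,
      (⨅ i, ker (δ i)).map
        (mulRight K ((List.ofFn fun i => x i ^ ((α i : ℕ))).prod))) = ⊤ ∧
    iSupIndep (fun α : Fin n → Fin p =>
      (⨅ i, ker (δ i)).map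
        (mulLeft K ((List.ofFn fun i => x i ^ ((α i : ℕ))).prod))) ∧
    (⨆ α : Fin n → Fin p,
      (⨅ i, ker (δ i)).map
        (mulLeft K ((List.ofFn fun i => x i ^ ((α i : ℕ))).prod))) = ⊤ := by
  classical
  have hcomm' : ∀ i j a, δ i (δ j a) = δ j (δ i a) := by
    intro i j a
    have h2 := LinearMap.congr_fun (hcomm i j) a
    simpa [Module.End.mul_apply] using h2
  obtain ⟨Q, hQ1, hQ2, hQ3, -⟩ := auxR hp n δ hleib hcomm' hnil x hx
  obtain ⟨P, hP1, hP2, hP3, -⟩ := auxL hp n δ hleib hcomm' hnil x hx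
  refine ⟨?_, ?_, ?_, ?_⟩
  · intro α
    rw [Submodule.disjoint_def]
    intro a haα hasup
    obtain ⟨c, hc, rfl⟩ := Submodule.mem_map.mp haα
    have hcker : ∀ i, δ i c = 0 :=
      fun i => LinearMap.mem_ker.mp ((Submodule.mem_iInf _).mp hc i)
    have hker : (⨆ β, ⨆ (_ : β ≠ α),
        (⨅ i, ker (δ i)).map
          (mulRight K ((List.ofFn fun i => x i ^ ((β i : ℕ))).prod)))
        ≤ ker (Q α) := by
      refine iSup_le fun β => iSup_le fun hβ => ?_
      intro b hb
      obtain ⟨c', hc', rfl⟩ := Submodule.mem_map.mp hb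
      rw [LinearMap.mem_ker, mulRight_apply,
        hQ3 α β c' (fun i => LinearMap.mem_ker.mp ((Submodule.mem_iInf _).mp hc' i)),
        if_neg hβ]
    have h0 : Q α ((mulRight K ((List.ofFn fun i => x i ^ ((α i : ℕ))).prod)) c) = 0 :=
      LinearMap.mem_ker.mp (hker hasup)
    rw [mulRight_apply, hQ3 α α c hcker, if_pos rfl] at h0
    rw [mulRight_apply, h0, zero_mul]
  · rw [eq_top_iff]
    intro a _
    rw [← hQ2 a]
    refine Submodule.sum_mem _ fun α _ => ?_
    refine Submodule.mem_iSup_of_mem α ?_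
    rw [Submodule.mem_map]
    exact ⟨Q α a,
      (Submodule.mem_iInf _).mpr fun i => LinearMap.mem_ker.mpr (hQ1 α i a),
      by rw [mulRight_apply]⟩
  · intro α
    rw [Submodule.disjoint_def]
    intro a haα hasup
    obtain ⟨c, hc, rfl⟩ := Submodule.mem_map.mp haα
    have hcker : ∀ i, δ i c = 0 :=
      fun i => LinearMap.mem_ker.mp ((Submodule.mem_iInf _).mp hc i)
    have hker : (⨆ β, ⨆ (_ : β ≠ α),
        (⨅ i, ker (δ i)).map
          (mulLeft K ((List.ofFn fun i => x i ^ ((β i : ℕ))).prod)))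
        ≤ ker (P α) := by
      refine iSup_le fun β => iSup_le fun hβ => ?_
      intro b hb
      obtain ⟨c', hc', rfl⟩ := Submodule.mem_map.mp hb
      rw [LinearMap.mem_ker, mulLeft_apply,
        hP3 α β c' (fun i => LinearMap.mem_ker.mp ((Submodule.mem_iInf _).mp hc' i)),
        if_neg hβ]
    have h0 : P α ((mulLeft K ((List.ofFn fun i => x i ^ ((α i : ℕ))).prod)) c) = 0 :=
      LinearMap.mem_ker.mp (hker hasup)
    rw [mulLeft_apply, hP3 α α c hcker, if_pos rfl] at h0
    rw [mulLeft_apply, h0, mul_zero]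
  · rw [eq_top_iff]
    intro a _
    rw [← hP2 a]
    refine Submodule.sum_mem _ fun α _ => ?_
    refine Submodule.mem_iSup_of_mem α ?_
    rw [Submodule.mem_map]
    exact ⟨P α a,
      (Submodule.mem_iInf _).mpr fun i => LinearMap.mem_ker.mpr (hP1 α i a),
      by rw [mulLeft_apply]⟩
end

section
/- Let δ_1, …, δ_n be pairwise commuting locally nilpotent K-derivations of A, and for each i let (x_i^[j])_{0≤j<l_i} be an iterative δ_i-descent of maximal length l_i whose members all lie in ∩_{k≠i} A^{δ_k}; set A^δ := ∩_i A^{δ_i}, E := {α ∈ ℕ^n : α_i < l_i}, x^[α] := x_1^[α_1]⋯x_n^[α_n]. Let σ be a K-algebra automorphism of A with σ(A^δ) = A^δ, and let σ_δ denote the automorphism of A^δ obtained by restriction. Put δ_i' := σ∘δ_i∘σ^{-1}, x_i'^[j] := σ(x_i^[j]), φ_i'(a) := Σ_{0≤j<l_i} (-1)^j x_i'^[j]·(δ_i')^j(a), ψ_i'(a) := Σ_{0≤j<l_i} (-1)^j (δ_i')^j(a)·x_i'^[j], φ_σ := φ_n'∘⋯∘φ_1', ψ_σ := ψ_1'∘⋯∘ψ_n',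 and δ'^α := (δ_1')^{α_1}∘⋯∘(δ_n')^{α_n}. Then for every a ∈ A: σ^{-1}(a) = Σ_{α∈E} x^[α]·σ_δ^{-1}(φ_σ(δ'^α(a))) = Σ_{α∈E} σ_δ^{-1}(ψ_σ(δ'^α(a)))·x^[α]. -/
open LinearMap

open Function

set_option linter.unusedSectionVars false
set_option maxHeartbeats 1000000

namespace Stmt12Aux

variable {A : Type*} [Ring A]

lemma finsum_subtype_of_vanish {ι : Type*} {M : Type*} [AddCommMonoid M] (p : ι → Prop)
    (f : ι → M) (h : ∀ i, ¬ p i → f i = 0) :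
    (∑ᶠ i : Subtype p, f ↑i) = ∑ᶠ i, f i := by
  classical
  rw [finsum_subtype_eq_finsum_cond]
  apply finsum_congr
  intro i
  rw [finsum_eq_if]
  by_cases hp : p i
  · rw [if_pos hp]
  · rw [if_neg hp, h i hp]

lemma map_zero_of_add {d : A → A} (h : ∀ a b, d (a + b) = d a + d b) : d 0 = 0 := by
  have h0 := h 0 0
  rw [add_zero] at h0
  have : d 0 + d 0 = d 0 + 0 := by rw [add_zero, ← h0]
  exact (add_left_cancel this)

lemma nil_bound {d : A → A} (h0 : d 0 = 0) {a : A} {N : ℕ} (hN : d^[N] a = 0) {j : ℕ}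
    (hj : N ≤ j) : d^[j] a = 0 := by
  rw [← Nat.sub_add_cancel hj, Function.iterate_add_apply, hN, Function.iterate_fixed h0]

lemma comm_iterate {f g : A → A} (h : ∀ x, g (f x) = f (g x)) (m : ℕ) (x : A) :
    g (f^[m] x) = f^[m] (g x) := by
  induction m generalizing x with
  | zero => simp
  | succ m ih => rw [Function.iterate_succ_apply, Function.iterate_succ_apply, ih, h]

lemma foldr_app_zero (fs : List (A → A)) (h : ∀ f ∈ fs, f 0 = 0) :
    fs.foldr (fun f b => f b) (0 : A) = 0 := by
  induction fs with
  | nil => rfl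
  | cons g t ih =>
    rw [List.foldr_cons, ih (fun f hf => h f (List.mem_cons_of_mem _ hf)),
      h g List.mem_cons_self]

lemma foldl_app_zero (fs : List (A → A)) (h : ∀ f ∈ fs, f 0 = 0) :
    fs.foldl (fun b f => f b) (0 : A) = 0 := by
  induction fs with
  | nil => rfl
  | cons g t ih =>
    rw [List.foldl_cons, h g List.mem_cons_self]
    exact ih (fun f hf => h f (List.mem_cons_of_mem _ hf))

lemma foldr_app_comm (fs : List (A → A)) (g : A → A)
    (h : ∀ f ∈ fs, ∀ x, g (f x) = f (g x)) (a : A) :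
    g (fs.foldr (fun f b => f b) a) = fs.foldr (fun f b => f b) (g a) := by
  induction fs with
  | nil => rfl
  | cons f t ih =>
    rw [List.foldr_cons, List.foldr_cons, h f List.mem_cons_self,
      ih (fun f' hf' => h f' (List.mem_cons_of_mem _ hf'))]


noncomputable def phiR (d : A → A) (y : ℕ → A) (b : A) : A :=
  ∑ᶠ j : ℕ, (-1 : ℤ) ^ j • (y j * d^[j] b)

noncomputable def psiL (d : A → A) (y : ℕ → A) (b : A) : A :=
  ∑ᶠ j : ℕ, (-1 : ℤ) ^ j • (d^[j] b * y j)

lemma phiR_zero (d : A → A) (y : ℕ → A) (h0 : d 0 = 0) : phiR d y 0 = 0 := by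
  have h : ∀ j : ℕ, (-1 : ℤ) ^ j • (y j * d^[j] (0 : A)) = 0 := fun j => by
    rw [Function.iterate_fixed h0, mul_zero, smul_zero]
  rw [phiR, finsum_congr h, finsum_zero]

lemma psiL_zero (d : A → A) (y : ℕ → A) (h0 : d 0 = 0) : psiL d y 0 = 0 := by
  have h : ∀ j : ℕ, (-1 : ℤ) ^ j • (d^[j] (0 : A) * y j) = 0 := fun j => by
    rw [Function.iterate_fixed h0, zero_mul, smul_zero]
  rw [psiL, finsum_congr h, finsum_zero]

section Expand

variable (d : A → A) (y : ℕ → A) (l : ℕ∞)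

lemma expandR
    (hadd : ∀ a b, d (a + b) = d a + d b)
    (hln : ∀ a : A, ∃ m : ℕ, d^[m] a = 0)
    (hl1 : 1 ≤ l)
    (hy0 : y 0 = 1)
    (hiter : ∀ j k : ℕ, ((j + k : ℕ) : ℕ∞) < l →
      y j * y k = ((j + k).choose j) • y (j + k))
    (hnil : ∀ j : ℕ, ¬ ((j : ℕ∞) < l) → ∀ z : A, d^[j] z = 0)
    (a : A) :
    (∑ᶠ k : ℕ, y k * phiR d y (d^[k] a)) = a := by
  classical
  have hd0 : d 0 = 0 := map_zero_of_add hadd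
  obtain ⟨N₀, hN₀⟩ := hln a
  set N := N₀ + 1 with hNdef
  have hvan : ∀ j : ℕ, N ≤ j → d^[j] a = 0 := fun j hj =>
    nil_bound hd0 hN₀ (le_trans (Nat.le_succ N₀) hj)
  -- outer finsum to Finset.range N
  rw [finsum_eq_sum_of_support_subset _ (s := Finset.range N) ?hsupp]
  case hsupp =>
    intro k hk
    simp only [Function.mem_support, ne_eq] at hk
    simp only [Finset.coe_range, Set.mem_Iio]
    by_contra hkN
    push_neg at hkN
    apply hk
    rw [hvan k hkN, phiR_zero d y hd0, mul_zero]
  -- inner phiR to Finset.range N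
  have hinner : ∀ k ∈ Finset.range N, y k * phiR d y (d^[k] a) =
      ∑ j ∈ Finset.range N, (-1 : ℤ) ^ j • (y k * (y j * d^[j + k] a)) := by
    intro k _
    rw [phiR]
    rw [finsum_eq_sum_of_support_subset _ (s := Finset.range N) ?hs2]
    case hs2 =>
      intro j hj
      simp only [Function.mem_support, ne_eq] at hj
      simp only [Finset.coe_range, Set.mem_Iio]
      by_contra hjN
      push_neg at hjN
      apply hj
      rw [← Function.iterate_add_apply, hvan (j + k) (le_trans hjN (Nat.le_add_right _ _)),
        mul_zero, smul_zero]
    rw [Finset.mul_sum]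
    apply Finset.sum_congr rfl
    intro j _
    rw [mul_smul_comm, ← Function.iterate_add_apply]
  rw [Finset.sum_congr rfl hinner]
  rw [← Finset.sum_product']
  rw [← Finset.sum_fiberwise_of_maps_to (g := fun p : ℕ × ℕ => p.1 + p.2)
    (t := Finset.range (2 * N)) (fun p hp => by
      simp only [Finset.mem_product, Finset.mem_range] at hp
      simp only [Finset.mem_range]
      omega)]
  have hfib : ∀ m ∈ Finset.range (2 * N),
      (∑ p ∈ (Finset.range N ×ˢ Finset.range N).filter (fun p => p.1 + p.2 = m),
        (-1 : ℤ) ^ p.2 • (y p.1 * (y p.2 * d^[p.2 + p.1] a))) = if m = 0 then a else 0 := by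
    intro m _
    by_cases hml : (m : ℕ∞) < l
    · by_cases hmN : m < N
      · -- main case
        rw [Finset.sum_nbij' (i := fun p : ℕ × ℕ => p.1) (j := fun k => (k, m - k))
          (t := Finset.range (m + 1))
          (g := fun k => (-1 : ℤ) ^ (m - k) • (y k * (y (m - k) * d^[m] a)))
          ?hi ?hj ?left ?right ?hval]
        case hi =>
          intro p hp
          simp only [Finset.mem_filter, Finset.mem_product, Finset.mem_range] at hp
          simp only [Finset.mem_range]
          omega
        case hj =>
          intro k hk
          simp only [Finset.mem_range] at hk
          simp only [Finset.mem_filter, Finset.mem_product, Finset.mem_range]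
          omega
        case left =>
          intro p hp
          simp only [Finset.mem_filter, Finset.mem_product, Finset.mem_range] at hp
          have h1 : m - p.1 = p.2 := by omega
          show (p.1, m - p.1) = p
          rw [h1]
        case right =>
          intro k hk
          rfl
        case hval =>
          intro p hp
          simp only [Finset.mem_filter, Finset.mem_product, Finset.mem_range] at hp
          have h1 : p.2 = m - p.1 := by omega
          have h2 : p.2 + p.1 = m := by omega
          show _ = (-1 : ℤ) ^ (m - p.1) • (y p.1 * (y (m - p.1) * d^[m] a))
          rw [h2, ← h1]
        -- now evaluate the antidiagonal sum
        have hterm : ∀ k ∈ Finset.range (m + 1),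
            (-1 : ℤ) ^ (m - k) • (y k * (y (m - k) * d^[m] a)) =
            ((-1 : ℤ) ^ (m - k) * (m.choose k : ℤ)) • (y (m) * d^[m] a) := by
          intro k hk
          simp only [Finset.mem_range] at hk
          have hkm : k ≤ m := by omega
          have hsum : k + (m - k) = m := by omega
          have hit := hiter k (m - k) (by rw [hsum]; exact hml)
          rw [hsum] at hit
          rw [← mul_assoc, hit, smul_mul_assoc, ← natCast_zsmul, smul_smul]
        rw [Finset.sum_congr rfl hterm, ← Finset.sum_smul]
        have hscal : (∑ k ∈ Finset.range (m + 1), (-1 : ℤ) ^ (m - k) * (m.choose k : ℤ)) =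
            if m = 0 then 1 else 0 := by
          rw [← Finset.sum_range_reflect]
          rw [Finset.sum_congr rfl (fun j hj => ?_), Int.alternating_sum_range_choose]
          simp only [Finset.mem_range] at hj
          have hjm : j ≤ m := by omega
          have h1 : m + 1 - 1 - j = m - j := by omega
          have h2 : m - (m - j) = j := Nat.sub_sub_self hjm
          rw [h1, h2, Nat.choose_symm hjm]
        rw [hscal]
        by_cases hm0 : m = 0
        · subst hm0
          rw [if_pos rfl, if_pos rfl, one_smul, Function.iterate_zero_apply, hy0, one_mul]
        · rw [if_neg hm0, if_neg hm0, zero_smul]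
      · -- m ≥ N: all terms vanish
        rw [Finset.sum_eq_zero, if_neg (by omega)]
        intro p hp
        simp only [Finset.mem_filter, Finset.mem_product, Finset.mem_range] at hp
        have : p.2 + p.1 = m := by omega
        rw [this, hvan m (by omega), mul_zero, mul_zero, smul_zero]
    · -- m ≥ l : all terms vanish by hnil
      have hm0 : m ≠ 0 := by
        intro h
        subst h
        apply hml
        calc ((0 : ℕ) : ℕ∞) = 0 := by norm_cast
        _ < 1 := zero_lt_one
        _ ≤ l := hl1
      rw [Finset.sum_eq_zero, if_neg hm0]
      intro p hp
      simp only [Finset.mem_filter, Finset.mem_product, Finset.mem_range] at hp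
      have : p.2 + p.1 = m := by omega
      rw [this, hnil m hml a, mul_zero, mul_zero, smul_zero]
  rw [Finset.sum_congr rfl hfib, Finset.sum_ite_eq' (Finset.range (2 * N)) 0 (fun _ => a),
    if_pos (by simp only [Finset.mem_range]; omega)]


lemma expandL
    (hadd : ∀ a b, d (a + b) = d a + d b)
    (hln : ∀ a : A, ∃ m : ℕ, d^[m] a = 0)
    (hl1 : 1 ≤ l)
    (hy0 : y 0 = 1)
    (hiter : ∀ j k : ℕ, ((j + k : ℕ) : ℕ∞) < l →
      y j * y k = ((j + k).choose j) • y (j + k))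
    (hnil : ∀ j : ℕ, ¬ ((j : ℕ∞) < l) → ∀ z : A, d^[j] z = 0)
    (a : A) :
    (∑ᶠ k : ℕ, psiL d y (d^[k] a) * y k) = a := by
  classical
  have hd0 : d 0 = 0 := map_zero_of_add hadd
  obtain ⟨N₀, hN₀⟩ := hln a
  set N := N₀ + 1 with hNdef
  have hvan : ∀ j : ℕ, N ≤ j → d^[j] a = 0 := fun j hj =>
    nil_bound hd0 hN₀ (le_trans (Nat.le_succ N₀) hj)
  rw [finsum_eq_sum_of_support_subset _ (s := Finset.range N) ?hsupp]
  case hsupp =>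
    intro k hk
    simp only [Function.mem_support, ne_eq] at hk
    simp only [Finset.coe_range, Set.mem_Iio]
    by_contra hkN
    push_neg at hkN
    apply hk
    rw [hvan k hkN, psiL_zero d y hd0, zero_mul]
  have hinner : ∀ k ∈ Finset.range N, psiL d y (d^[k] a) * y k =
      ∑ j ∈ Finset.range N, (-1 : ℤ) ^ j • ((d^[j + k] a * y j) * y k) := by
    intro k _
    rw [psiL]
    rw [finsum_eq_sum_of_support_subset _ (s := Finset.range N) ?hs2]
    case hs2 =>
      intro j hj
      simp only [Function.mem_support, ne_eq] at hj
      simp only [Finset.coe_range, Set.mem_Iio]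
      by_contra hjN
      push_neg at hjN
      apply hj
      rw [← Function.iterate_add_apply, hvan (j + k) (le_trans hjN (Nat.le_add_right _ _)),
        zero_mul, smul_zero]
    rw [Finset.sum_mul]
    apply Finset.sum_congr rfl
    intro j _
    rw [smul_mul_assoc, ← Function.iterate_add_apply]
  rw [Finset.sum_congr rfl hinner]
  rw [← Finset.sum_product']
  rw [← Finset.sum_fiberwise_of_maps_to (g := fun p : ℕ × ℕ => p.1 + p.2)
    (t := Finset.range (2 * N)) (fun p hp => by
      simp only [Finset.mem_product, Finset.mem_range] at hp
      simp only [Finset.mem_range]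
      omega)]
  have hfib : ∀ m ∈ Finset.range (2 * N),
      (∑ p ∈ (Finset.range N ×ˢ Finset.range N).filter (fun p => p.1 + p.2 = m),
        (-1 : ℤ) ^ p.2 • ((d^[p.2 + p.1] a * y p.2) * y p.1)) = if m = 0 then a else 0 := by
    intro m _
    by_cases hml : (m : ℕ∞) < l
    · by_cases hmN : m < N
      · rw [Finset.sum_nbij' (i := fun p : ℕ × ℕ => p.1) (j := fun k => (k, m - k))
          (t := Finset.range (m + 1))
          (g := fun k => (-1 : ℤ) ^ (m - k) • ((d^[m] a * y (m - k)) * y k))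
          ?hi ?hj ?left ?right ?hval]
        case hi =>
          intro p hp
          simp only [Finset.mem_filter, Finset.mem_product, Finset.mem_range] at hp
          simp only [Finset.mem_range]
          omega
        case hj =>
          intro k hk
          simp only [Finset.mem_range] at hk
          simp only [Finset.mem_filter, Finset.mem_product, Finset.mem_range]
          omega
        case left =>
          intro p hp
          simp only [Finset.mem_filter, Finset.mem_product, Finset.mem_range] at hp
          have h1 : m - p.1 = p.2 := by omega
          show (p.1, m - p.1) = p
          rw [h1]
        case right =>
          intro k hk
          rfl
        case hval =>
          intro p hp
          simp only [Finset.mem_filter, Finset.mem_product, Finset.mem_range] at hp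
          have h1 : p.2 = m - p.1 := by omega
          have h2 : p.2 + p.1 = m := by omega
          show _ = (-1 : ℤ) ^ (m - p.1) • ((d^[m] a * y (m - p.1)) * y p.1)
          rw [h2, ← h1]
        have hterm : ∀ k ∈ Finset.range (m + 1),
            (-1 : ℤ) ^ (m - k) • ((d^[m] a * y (m - k)) * y k) =
            ((-1 : ℤ) ^ (m - k) * (m.choose (m - k) : ℤ)) • (d^[m] a * y m) := by
          intro k hk
          simp only [Finset.mem_range] at hk
          have hkm : k ≤ m := by omega
          have hsum : (m - k) + k = m := by omega
          have hit := hiter (m - k) k (by rw [hsum]; exact hml)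
          rw [hsum] at hit
          rw [mul_assoc, hit, mul_smul_comm, ← natCast_zsmul, smul_smul]
        rw [Finset.sum_congr rfl hterm, ← Finset.sum_smul]
        have hscal : (∑ k ∈ Finset.range (m + 1), (-1 : ℤ) ^ (m - k) * (m.choose (m - k) : ℤ)) =
            if m = 0 then 1 else 0 := by
          rw [← Finset.sum_range_reflect]
          rw [Finset.sum_congr rfl (fun j hj => ?_), Int.alternating_sum_range_choose]
          simp only [Finset.mem_range] at hj
          have hjm : j ≤ m := by omega
          have h1 : m + 1 - 1 - j = m - j := by omega
          have h2 : m - (m - j) = j := Nat.sub_sub_self hjm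
          rw [h1, h2]
        rw [hscal]
        by_cases hm0 : m = 0
        · subst hm0
          rw [if_pos rfl, if_pos rfl, one_smul, Function.iterate_zero_apply, hy0, mul_one]
        · rw [if_neg hm0, if_neg hm0, zero_smul]
      · rw [Finset.sum_eq_zero, if_neg (by omega)]
        intro p hp
        simp only [Finset.mem_filter, Finset.mem_product, Finset.mem_range] at hp
        have : p.2 + p.1 = m := by omega
        rw [this, hvan m (by omega), zero_mul, zero_mul, smul_zero]
    · have hm0 : m ≠ 0 := by
        intro h
        subst h
        apply hml
        calc ((0 : ℕ) : ℕ∞) = 0 := by norm_cast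
        _ < 1 := zero_lt_one
        _ ≤ l := hl1
      rw [Finset.sum_eq_zero, if_neg hm0]
      intro p hp
      simp only [Finset.mem_filter, Finset.mem_product, Finset.mem_range] at hp
      have : p.2 + p.1 = m := by omega
      rw [this, hnil m hml a, zero_mul, zero_mul, smul_zero]
  rw [Finset.sum_congr rfl hfib, Finset.sum_ite_eq' (Finset.range (2 * N)) 0 (fun _ => a),
    if_pos (by simp only [Finset.mem_range]; omega)]

end Expand


structure Desc (A : Type*) [Ring A] (n : ℕ) where
  d : Fin n → A → A
  y : Fin n → ℕ → A
  l : Fin n → ℕ∞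
  hadd : ∀ i a b, d i (a + b) = d i a + d i b
  hleib : ∀ i a b, d i (a * b) = d i a * b + a * d i b
  hcomm : ∀ i j a, d i (d j a) = d j (d i a)
  hln : ∀ i a, ∃ m, (d i)^[m] a = 0
  hl1 : ∀ i, 1 ≤ l i
  hy0 : ∀ i, y i 0 = 1
  hiter : ∀ i (j k : ℕ), ((j + k : ℕ) : ℕ∞) < l i →
    y i j * y i k = ((j + k).choose j) • y i (j + k)
  hnil : ∀ i (j : ℕ), ¬ ((j : ℕ∞) < l i) → ∀ z, (d i)^[j] z = 0
  hmem : ∀ i k, k ≠ i → ∀ j : ℕ, ((j : ℕ∞)) < l i → d k (y i j) = 0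

namespace Desc

variable {A : Type*} [Ring A] {n : ℕ}

noncomputable def D (T : Desc A n) (α : Fin n → ℕ) (a : A) : A :=
  (List.ofFn fun i => (T.d i)^[α i]).foldr (fun f b => f b) a

noncomputable def phi (T : Desc A n) (i : Fin n) : A → A := phiR (T.d i) (T.y i)

noncomputable def psi (T : Desc A n) (i : Fin n) : A → A := psiL (T.d i) (T.y i)

noncomputable def Phi (T : Desc A n) (a : A) : A := (List.ofFn T.phi).foldl (fun b f => f b) a

noncomputable def Psi (T : Desc A n) (a : A) : A := (List.ofFn T.psi).foldr (fun f b => f b) a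

noncomputable def P (T : Desc A n) (α : Fin n → ℕ) : A := (List.ofFn fun i => T.y i (α i)).prod

noncomputable def tail (T : Desc A (n + 1)) : Desc A n where
  d i := T.d i.succ
  y i := T.y i.succ
  l i := T.l i.succ
  hadd i := T.hadd i.succ
  hleib i := T.hleib i.succ
  hcomm i j := T.hcomm i.succ j.succ
  hln i := T.hln i.succ
  hl1 i := T.hl1 i.succ
  hy0 i := T.hy0 i.succ
  hiter i := T.hiter i.succ
  hnil i := T.hnil i.succ
  hmem i k hk := T.hmem i.succ k.succ (fun h => hk (Fin.succ_injective n h))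

lemma d_zero (T : Desc A n) (i : Fin n) : T.d i 0 = 0 := map_zero_of_add (T.hadd i)

lemma d_iter_zero (T : Desc A n) (i : Fin n) (m : ℕ) : (T.d i)^[m] (0 : A) = 0 :=
  Function.iterate_fixed (T.d_zero i) m

lemma D_zero (T : Desc A n) (α : Fin n → ℕ) : T.D α 0 = 0 := by
  apply foldr_app_zero
  intro f hf
  rw [List.mem_ofFn] at hf
  obtain ⟨i, rfl⟩ := hf
  exact T.d_iter_zero i (α i)

lemma phi_zero (T : Desc A n) (i : Fin n) : T.phi i 0 = 0 := phiR_zero _ _ (T.d_zero i)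

lemma psi_zero (T : Desc A n) (i : Fin n) : T.psi i 0 = 0 := psiL_zero _ _ (T.d_zero i)

lemma Phi_zero (T : Desc A n) : T.Phi 0 = 0 := by
  apply foldl_app_zero
  intro f hf
  rw [List.mem_ofFn] at hf
  obtain ⟨i, rfl⟩ := hf
  exact T.phi_zero i

lemma Psi_zero (T : Desc A n) : T.Psi 0 = 0 := by
  apply foldr_app_zero
  intro f hf
  rw [List.mem_ofFn] at hf
  obtain ⟨i, rfl⟩ := hf
  exact T.psi_zero i

lemma D_cons (T : Desc A (n + 1)) (k : ℕ) (β : Fin n → ℕ) (a : A) :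
    T.D (Fin.cons k β) a = (T.d 0)^[k] (T.tail.D β a) := by
  rw [D, D, List.ofFn_succ, List.foldr_cons]
  simp only [Fin.cons_zero, Fin.cons_succ, tail]

lemma Phi_cons (T : Desc A (n + 1)) (a : A) : T.Phi a = T.tail.Phi (T.phi 0 a) := by
  rw [Phi, Phi, List.ofFn_succ, List.foldl_cons]
  rfl

lemma Psi_cons (T : Desc A (n + 1)) (a : A) : T.Psi a = T.psi 0 (T.tail.Psi a) := by
  rw [Psi, Psi, List.ofFn_succ, List.foldr_cons]
  rfl

lemma P_cons (T : Desc A (n + 1)) (k : ℕ) (β : Fin n → ℕ) :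
    T.P (Fin.cons k β) = T.y 0 k * T.tail.P β := by
  rw [P, P, List.ofFn_succ, List.prod_cons]
  simp only [Fin.cons_zero, Fin.cons_succ, tail]

lemma d_comm_iter (T : Desc A n) (i j : Fin n) (m : ℕ) (x : A) :
    T.d i ((T.d j)^[m] x) = (T.d j)^[m] (T.d i x) :=
  comm_iterate (fun x => T.hcomm i j x) m x

lemma D_eq_zero_of (T : Desc A n) (α : Fin n → ℕ) (i : Fin n)
    (h : ∀ z, (T.d i)^[α i] z = 0) (a : A) : T.D α a = 0 := by
  induction n with
  | zero => exact i.elim0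
  | succ n ih =>
    have hform : T.D α a = (T.d 0)^[α 0] (T.tail.D (Fin.tail α) a) := by
      conv_lhs => rw [← Fin.cons_self_tail α]
      rw [D_cons]
    rcases Fin.eq_zero_or_eq_succ i with hi | ⟨j, rfl⟩
    · subst hi
      rw [hform]
      exact h _
    · rw [hform, ih T.tail (Fin.tail α) j h, T.d_iter_zero]


lemma d_comm_phi (T : Desc A n) (i j : Fin n) (hij : i ≠ j) (b : A) :
    T.d i (T.phi j b) = T.phi j (T.d i b) := by
  classical
  rw [phi, phiR, phiR]
  obtain ⟨N₀, hN₀⟩ := T.hln j b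
  set g : A →+ A := AddMonoidHom.mk' (T.d i) (T.hadd i) with hg
  have hgs : ∀ z, T.d i z = g z := fun z => rfl
  rw [hgs, AddMonoidHom.map_finsum g ?hfin]
  case hfin =>
    apply Set.Finite.subset (Finset.finite_toSet (Finset.range (N₀ + 1)))
    intro k hk
    simp only [Function.mem_support, ne_eq] at hk
    simp only [Finset.coe_range, Set.mem_Iio]
    by_contra hkN
    push_neg at hkN
    apply hk
    rw [nil_bound (T.d_zero j) hN₀ (by omega), mul_zero, smul_zero]
  apply finsum_congr
  intro k
  rw [AddMonoidHom.map_zsmul]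
  have hrepr : g (T.y j k * (T.d j)^[k] b) = T.d i (T.y j k * (T.d j)^[k] b) := rfl
  rw [hrepr]
  by_cases hk : (k : ℕ∞) < T.l j
  · rw [T.hleib i, T.hmem j i hij k hk, zero_mul, zero_add, T.d_comm_iter i j]
  · rw [T.hnil j k hk b, T.hnil j k hk (T.d i b), mul_zero, T.d_zero i]

lemma d_comm_psi (T : Desc A n) (i j : Fin n) (hij : i ≠ j) (b : A) :
    T.d i (T.psi j b) = T.psi j (T.d i b) := by
  classical
  rw [psi, psiL, psiL]
  obtain ⟨N₀, hN₀⟩ := T.hln j b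
  set g : A →+ A := AddMonoidHom.mk' (T.d i) (T.hadd i) with hg
  have hgs : ∀ z, T.d i z = g z := fun z => rfl
  rw [hgs, AddMonoidHom.map_finsum g ?hfin]
  case hfin =>
    apply Set.Finite.subset (Finset.finite_toSet (Finset.range (N₀ + 1)))
    intro k hk
    simp only [Function.mem_support, ne_eq] at hk
    simp only [Finset.coe_range, Set.mem_Iio]
    by_contra hkN
    push_neg at hkN
    apply hk
    rw [nil_bound (T.d_zero j) hN₀ (by omega), zero_mul, smul_zero]
  apply finsum_congr
  intro k
  rw [AddMonoidHom.map_zsmul]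
  have hrepr : g ((T.d j)^[k] b * T.y j k) = T.d i ((T.d j)^[k] b * T.y j k) := rfl
  rw [hrepr]
  by_cases hk : (k : ℕ∞) < T.l j
  · rw [T.hleib i, T.hmem j i hij k hk, mul_zero, add_zero, T.d_comm_iter i j]
  · rw [T.hnil j k hk b, T.hnil j k hk (T.d i b), zero_mul, T.d_zero i]

lemma D_comm (T : Desc A n) (g : A → A) (hg : ∀ i x, g (T.d i x) = T.d i (g x))
    (α : Fin n → ℕ) (a : A) : g (T.D α a) = T.D α (g a) := by
  rw [D, D]
  apply foldr_app_comm
  intro f hf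
  rw [List.mem_ofFn] at hf
  obtain ⟨i, rfl⟩ := hf
  intro x
  show g ((T.d i)^[α i] x) = (T.d i)^[α i] (g x)
  exact comm_iterate (hg i) (α i) x

lemma FS : ∀ {n : ℕ} (T : Desc A n) (a : A), (Function.support fun α => T.D α a).Finite := by
  intro n
  induction n with
  | zero =>
    intro T a
    apply Set.Finite.subset (Set.finite_singleton (fun _ : Fin 0 => (0 : ℕ)))
    intro z _
    simp only [Set.mem_singleton_iff]
    funext i
    exact i.elim0
  | succ n ih =>
    intro T a
    classical
    have hSfin := ih T.tail a
    choose Nb hNb using fun β : Fin n → ℕ => T.hln 0 (T.tail.D β a)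
    have hinj : Function.Injective (fun α : Fin (n + 1) → ℕ => (α 0, α ∘ Fin.succ)) := by
      intro f g h
      simp only [Prod.mk.injEq] at h
      funext i
      rcases Fin.eq_zero_or_eq_succ i with hi | ⟨j, rfl⟩
      · subst hi; exact h.1
      · exact congrFun h.2 j
    have htarget : (⋃ β ∈ (Function.support fun β => T.tail.D β a),
        (Set.Iio (Nb β) ×ˢ ({β} : Set (Fin n → ℕ)))).Finite :=
      hSfin.biUnion (fun β _ => (Set.finite_Iio _).prod (Set.finite_singleton _))
    apply Set.Finite.subset ((htarget.preimage hinj.injOn))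
    intro α hα
    simp only [Function.mem_support, ne_eq] at hα
    have hd : T.D α a = (T.d 0)^[α 0] (T.tail.D (α ∘ Fin.succ) a) := by
      conv_lhs => rw [← Fin.cons_self_tail α]
      rw [D_cons]
      rfl
    simp only [Set.mem_preimage, Set.mem_iUnion, Function.mem_support, ne_eq,
      Set.mem_prod, Set.mem_Iio, Set.mem_singleton_iff]
    refine ⟨α ∘ Fin.succ, ?_, ?_, rfl⟩
    · intro h0
      apply hα
      rw [hd]
      show (T.d 0)^[α 0] (T.tail.D (α ∘ Fin.succ) a) = 0
      have h1 : T.tail.D (α ∘ Fin.succ) a = 0 := h0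
      rw [h1, T.d_iter_zero]
    · by_contra hge
      push_neg at hge
      apply hα
      rw [hd, nil_bound (T.d_zero 0) (hNb (α ∘ Fin.succ)) hge]

theorem main : ∀ {n : ℕ} (T : Desc A n) (a : A),
    a = (∑ᶠ α : Fin n → ℕ, T.P α * T.Phi (T.D α a)) ∧
    a = (∑ᶠ α : Fin n → ℕ, T.Psi (T.D α a) * T.P α) := by
  intro n
  induction n with
  | zero =>
    intro T a
    constructor
    · rw [finsum_unique (f := fun α : Fin 0 → ℕ => T.P α * T.Phi (T.D α a))]
      rw [P, Phi, D]
      simp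
    · rw [finsum_unique (f := fun α : Fin 0 → ℕ => T.Psi (T.D α a) * T.P α)]
      rw [P, Psi, D]
      simp
  | succ n ih =>
    intro T a
    classical
    constructor
    · -- right-hand version
      have hφcomm : ∀ (i : Fin n) (x : A), T.phi 0 (T.tail.d i x) = T.tail.d i (T.phi 0 x) :=
        fun i x => (T.d_comm_phi i.succ 0 (Fin.succ_ne_zero i) x).symm
      have hdcomm : ∀ (k : ℕ) (i : Fin n) (x : A),
          (T.d 0)^[k] (T.tail.d i x) = T.tail.d i ((T.d 0)^[k] x) :=
        fun k i x => (comm_iterate (fun z => T.hcomm i.succ 0 z) k x).symm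
      have key : ∀ k : ℕ, T.y 0 k * T.phi 0 ((T.d 0)^[k] a) =
          ∑ᶠ β : Fin n → ℕ, T.P (Fin.cons k β) * T.Phi (T.D (Fin.cons k β) a) := by
        intro k
        have hb := (ih T.tail (T.phi 0 ((T.d 0)^[k] a))).1
        rw [hb]
        rw [mul_finsum' _ _ ?hfin]
        case hfin =>
          apply Set.Finite.subset (FS T.tail (T.phi 0 ((T.d 0)^[k] a)))
          intro β hβ
          simp only [Function.mem_support, ne_eq] at hβ ⊢
          intro h0
          apply hβ
          rw [h0, Phi_zero, mul_zero]
        apply finsum_congr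
        intro β
        rw [← D_comm T.tail (T.phi 0) hφcomm β, ← D_comm T.tail ((T.d 0)^[k]) (hdcomm k) β,
          ← D_cons, ← mul_assoc, ← P_cons, ← Phi_cons]
      have hexp := expandR (T.d 0) (T.y 0) (T.l 0) (T.hadd 0) (T.hln 0) (T.hl1 0) (T.hy0 0)
        (T.hiter 0) (T.hnil 0) a
      refine hexp.symm.trans ?_
      have hsup : (Function.support fun p : ℕ × (Fin n → ℕ) =>
          T.P (Fin.cons p.1 p.2) * T.Phi (T.D (Fin.cons p.1 p.2) a)).Finite := by
        have hinj : Function.Injective (fun p : ℕ × (Fin n → ℕ) => Fin.cons p.1 p.2 :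
            (ℕ × (Fin n → ℕ)) → (Fin (n+1) → ℕ)) := by
          intro p q h
          have h0 := congrFun h 0
          have hs : p.2 = q.2 := funext fun i => by
            have := congrFun h i.succ
            simpa [Fin.cons_succ] using this
          exact Prod.ext (by simpa [Fin.cons_zero] using h0) hs
        apply Set.Finite.subset (((FS T a).preimage hinj.injOn))
        intro p hp
        simp only [Function.mem_support, ne_eq] at hp
        simp only [Set.mem_preimage, Function.mem_support, ne_eq]
        intro h0
        apply hp
        rw [h0, Phi_zero, mul_zero]
      calc (∑ᶠ k : ℕ, T.y 0 k * phiR (T.d 0) (T.y 0) ((T.d 0)^[k] a))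
          = ∑ᶠ k : ℕ, ∑ᶠ β : Fin n → ℕ,
              T.P (Fin.cons k β) * T.Phi (T.D (Fin.cons k β) a) := finsum_congr key
        _ = ∑ᶠ p : ℕ × (Fin n → ℕ),
              T.P (Fin.cons p.1 p.2) * T.Phi (T.D (Fin.cons p.1 p.2) a) :=
            (finsum_curry _ hsup).symm
        _ = ∑ᶠ α : Fin (n + 1) → ℕ, T.P α * T.Phi (T.D α a) := by
            have hfe : (fun p : ℕ × (Fin n → ℕ) =>
                T.P (Fin.cons p.1 p.2) * T.Phi (T.D (Fin.cons p.1 p.2) a)) =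
                fun p => (fun α => T.P α * T.Phi (T.D α a))
                  ((Fin.consEquiv fun _ => ℕ) p) := by
              funext p
              simp [Fin.consEquiv]
            rw [hfe]
            exact finsum_comp_equiv (Fin.consEquiv fun _ => ℕ) (f := fun α => T.P α * T.Phi (T.D α a))
    · -- left-hand version
      have hψcomm0 : ∀ (i : Fin n) (x : A), T.d 0 (T.tail.psi i x) = T.tail.psi i (T.d 0 x) :=
        fun i x => T.d_comm_psi 0 i.succ (Fin.succ_ne_zero i).symm x
      have h1 : ∀ z : A, T.d 0 (T.tail.Psi z) = T.tail.Psi (T.d 0 z) := by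
        intro z
        rw [Psi, Psi]
        apply foldr_app_comm
        intro f hf
        rw [List.mem_ofFn] at hf
        obtain ⟨i, rfl⟩ := hf
        intro x
        exact hψcomm0 i x
      have hΨcomm : ∀ (k : ℕ) (z : A),
          (T.d 0)^[k] (T.tail.Psi z) = T.tail.Psi ((T.d 0)^[k] z) :=
        fun k z => (comm_iterate (fun x => (h1 x).symm) k z).symm
      have key : ∀ β : Fin n → ℕ, T.tail.Psi (T.tail.D β a) * T.tail.P β =
          ∑ᶠ k : ℕ, T.Psi (T.D (Fin.cons k β) a) * T.P (Fin.cons k β) := by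
        intro β
        have hbL := expandL (T.d 0) (T.y 0) (T.l 0) (T.hadd 0) (T.hln 0) (T.hl1 0) (T.hy0 0)
          (T.hiter 0) (T.hnil 0) (T.tail.Psi (T.tail.D β a))
        conv_lhs => rw [← hbL]
        rw [finsum_mul' _ _ ?hfin2]
        case hfin2 =>
          obtain ⟨N₀, hN₀⟩ := T.hln 0 (T.tail.Psi (T.tail.D β a))
          apply Set.Finite.subset (Finset.finite_toSet (Finset.range (N₀ + 1)))
          intro k hk
          simp only [Function.mem_support, ne_eq] at hk
          simp only [Finset.coe_range, Set.mem_Iio]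
          by_contra hkN
          push_neg at hkN
          apply hk
          rw [nil_bound (T.d_zero 0) hN₀ (by omega), psiL_zero _ _ (T.d_zero 0), zero_mul]
        apply finsum_congr
        intro k
        rw [mul_assoc, ← P_cons]
        congr 1
        calc psiL (T.d 0) (T.y 0) ((T.d 0)^[k] (T.tail.Psi (T.tail.D β a)))
            = T.psi 0 (T.tail.Psi ((T.d 0)^[k] (T.tail.D β a))) := by rw [hΨcomm]; rfl
          _ = T.psi 0 (T.tail.Psi (T.D (Fin.cons k β) a)) := by rw [← D_cons]
          _ = T.Psi (T.D (Fin.cons k β) a) := (Psi_cons T _).symm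
      have hstart := (ih T.tail a).2
      refine hstart.trans ?_
      have hinj : Function.Injective (fun p : (Fin n → ℕ) × ℕ => Fin.cons p.2 p.1 :
          ((Fin n → ℕ) × ℕ) → (Fin (n+1) → ℕ)) := by
        intro p q h
        have h0 := congrFun h 0
        have hs : p.1 = q.1 := funext fun i => by
          have := congrFun h i.succ
          simpa [Fin.cons_succ] using this
        exact Prod.ext hs (by simpa [Fin.cons_zero] using h0)
      have hsup : (Function.support fun p : (Fin n → ℕ) × ℕ =>
          T.Psi (T.D (Fin.cons p.2 p.1) a) * T.P (Fin.cons p.2 p.1)).Finite := by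
        apply Set.Finite.subset (((FS T a).preimage hinj.injOn))
        intro p hp
        simp only [Function.mem_support, ne_eq] at hp
        simp only [Set.mem_preimage, Function.mem_support, ne_eq]
        intro h0
        apply hp
        rw [h0, Psi_zero, zero_mul]
      calc (∑ᶠ β : Fin n → ℕ, T.tail.Psi (T.tail.D β a) * T.tail.P β)
          = ∑ᶠ β : Fin n → ℕ, ∑ᶠ k : ℕ,
              T.Psi (T.D (Fin.cons k β) a) * T.P (Fin.cons k β) := finsum_congr key
        _ = ∑ᶠ p : (Fin n → ℕ) × ℕ,
              T.Psi (T.D (Fin.cons p.2 p.1) a) * T.P (Fin.cons p.2 p.1) :=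
            (finsum_curry _ hsup).symm
        _ = ∑ᶠ α : Fin (n + 1) → ℕ, T.Psi (T.D α a) * T.P α := by
            have hfe : (fun p : (Fin n → ℕ) × ℕ =>
                T.Psi (T.D (Fin.cons p.2 p.1) a) * T.P (Fin.cons p.2 p.1)) =
                fun p => (fun α => T.Psi (T.D α a) * T.P α)
                  (((Equiv.prodComm _ _).trans (Fin.consEquiv fun _ => ℕ)) p) := by
              funext p
              simp [Fin.consEquiv, Equiv.prodComm]
            rw [hfe]
            exact finsum_comp_equiv ((Equiv.prodComm _ _).trans (Fin.consEquiv fun _ => ℕ)) (f := fun α => T.Psi (T.D α a) * T.P α)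

end Desc

end Stmt12Aux

open Stmt12Aux


/-- With commuting locally nilpotent derivations `δ i` and iterative
`δ i`-descents `(x i j)_{j < l i}` of maximal length as in Statements 8–9, let `σ` be a
`K`-algebra automorphism of `A` preserving `A^δ := ∩ᵢ ker (δ i)` (i.e. `σ (A^δ) = A^δ`),
and put `δ' i := σ ∘ δ i ∘ σ⁻¹`, `x' i j := σ (x i j)`,
`φ'ᵢ a := ∑_{j < l i} (-1)^j (x' i j)·(δ' i)^j a`,
`ψ'ᵢ a := ∑_{j < l i} (-1)^j ((δ' i)^j a)·(x' i j)`,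
`Φ' := φ'_{n-1} ∘ ⋯ ∘ φ'_0`, `Ψ' := ψ'_0 ∘ ⋯ ∘ ψ'_{n-1}`, and
`δ'^α := (δ' 0)^{α 0} ∘ ⋯ ∘ (δ' (n-1))^{α (n-1)}`.  Since the values `Φ'(δ'^α a)` and
`Ψ'(δ'^α a)` lie in `A^δ`, the restriction `σ_δ⁻¹` of `σ⁻¹` applies to them, and for every
`a ∈ A`:
`σ⁻¹ a = ∑_{α ∈ E} x^[α]·σ_δ⁻¹(Φ'(δ'^α a)) = ∑_{α ∈ E} σ_δ⁻¹(Ψ'(δ'^α a))·x^[α]`. -/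
theorem stmt_12 {K A : Type*} [Field K] [Ring A] [Algebra K A]
    (n : ℕ) (δ : Fin n → Module.End K A)
    (hleib : ∀ i, ∀ a b : A, δ i (a * b) = δ i a * b + a * δ i b)
    (hcomm : ∀ i j, Commute (δ i) (δ j))
    (hln : ∀ i, ∀ a : A, ∃ m : ℕ, ((δ i) ^ m) a = 0)
    (l : Fin n → ℕ∞) (hl1 : ∀ i, 1 ≤ l i)
    (x : Fin n → ℕ → A)
    (hx0 : ∀ i, x i 0 = 1)
    (hxd : ∀ i (j : ℕ), ((j + 1 : ℕ) : ℕ∞) < l i → δ i (x i (j + 1)) = x i j)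
    (hiter : ∀ i (j k : ℕ), ((j + k : ℕ) : ℕ∞) < l i →
      x i j * x i k = ((j + k).choose j) • x i (j + k))
    (hmax : ∀ i, (l i = ⊤ ∧ ∀ m : ℕ, (δ i) ^ m ≠ 0) ∨
      (∃ m : ℕ, l i = (m : ℕ∞) ∧ (δ i) ^ m = 0))
    (hmem : ∀ i k, k ≠ i → ∀ j : ℕ, (j : ℕ∞) < l i → δ k (x i j) = 0)
    (σ : A ≃ₐ[K] A)
    (hσ : ∀ a : A, (∀ i, δ i a = 0) ↔ (∀ i, δ i (σ a) = 0))
    (δ' : Fin n → A → A)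
    (hδ' : ∀ i (a : A), δ' i a = σ (δ i (σ.symm a)))
    (φ' ψ' : Fin n → A → A)
    (hφ' : ∀ i (a : A), φ' i a =
      ∑ᶠ j : {j : ℕ // (j : ℕ∞) < l i},
        (-1 : A) ^ (j : ℕ) * (σ (x i (j : ℕ)) * (δ' i)^[(j : ℕ)] a))
    (hψ' : ∀ i (a : A), ψ' i a =
      ∑ᶠ j : {j : ℕ // (j : ℕ∞) < l i},
        (-1 : A) ^ (j : ℕ) * ((δ' i)^[(j : ℕ)] a * σ (x i (j : ℕ))))
    (Φ' Ψ' : A → A)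
    (hΦ' : ∀ a : A, Φ' a = (List.ofFn φ').foldl (fun b f => f b) a)
    (hΨ' : ∀ a : A, Ψ' a = (List.ofFn ψ').foldr (fun f b => f b) a)
    (dα : {α : Fin n → ℕ // ∀ i, ((α i : ℕ∞) < l i)} → A → A)
    (hdα : ∀ α (a : A), dα α a =
      (List.ofFn fun i => (δ' i)^[α.1 i]).foldr (fun f b => f b) a) :
    ∀ a : A,
      σ.symm a = ∑ᶠ α : {α : Fin n → ℕ // ∀ i, ((α i : ℕ∞) < l i)},
        (List.ofFn fun i => x i (α.1 i)).prod * σ.symm (Φ' (dα α a)) ∧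
      σ.symm a = ∑ᶠ α : {α : Fin n → ℕ // ∀ i, ((α i : ℕ∞) < l i)},
        σ.symm (Ψ' (dα α a)) * (List.ofFn fun i => x i (α.1 i)).prod := by
  classical
  have hσs : ∀ z : A, σ.symm (σ z) = z := fun z => σ.symm_apply_apply z
  have hσa : ∀ z : A, σ (σ.symm z) = z := fun z => σ.apply_symm_apply z
  have hδ'add : ∀ i (u v : A), δ' i (u + v) = δ' i u + δ' i v := by
    intro i u v
    rw [hδ', hδ', hδ', map_add, map_add, map_add]
  have hδ'leib : ∀ i (u v : A), δ' i (u * v) = δ' i u * v + u * δ' i v := by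
    intro i u v
    rw [hδ', map_mul, hleib i, map_add, map_mul, map_mul, hσa, hσa, ← hδ', ← hδ']
  have hδ'comm : ∀ i j (u : A), δ' i (δ' j u) = δ' j (δ' i u) := by
    intro i j u
    have hc : δ i (δ j (σ.symm u)) = δ j (δ i (σ.symm u)) := by
      have h2 := DFunLike.congr_fun (hcomm i j) (σ.symm u)
      simpa [Module.End.mul_apply] using h2
    rw [hδ' i, hδ' j u, hσs, hδ' j, hδ' i u, hσs, hc]
  have hit' : ∀ i m (u : A), (δ' i)^[m] u = σ ((δ i ^ m) (σ.symm u)) := by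
    intro i m
    induction m with
    | zero =>
      intro u
      simp only [Function.iterate_zero_apply, pow_zero]
      rw [Module.End.one_apply, hσa]
    | succ m ihm =>
      intro u
      rw [Function.iterate_succ_apply, ihm, hδ', hσs, pow_succ]
      rw [Module.End.mul_apply]
  have hln' : ∀ i (u : A), ∃ m, (δ' i)^[m] u = 0 := by
    intro i u
    obtain ⟨m, hm⟩ := hln i (σ.symm u)
    exact ⟨m, by rw [hit', hm, map_zero]⟩
  have hnil' : ∀ i (j : ℕ), ¬ ((j : ℕ∞) < l i) → ∀ z : A, (δ' i)^[j] z = 0 := by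
    intro i j hj z
    rcases hmax i with ⟨htop, -⟩ | ⟨m, hlm, hpow⟩
    · exfalso
      apply hj
      rw [htop]
      exact lt_top_iff_ne_top.mpr (by simp)
    · have hmj : m ≤ j := by
        rw [hlm] at hj
        exact_mod_cast not_lt.mp hj
      rw [hit']
      have hz : (δ i ^ j) (σ.symm z) = 0 := by
        have hsplit : δ i ^ j = δ i ^ (j - m) * δ i ^ m := by
          rw [← pow_add]
          congr 1
          omega
        rw [hsplit, Module.End.mul_apply, hpow, LinearMap.zero_apply, map_zero]
      rw [hz, map_zero]
  have hmem' : ∀ i k, k ≠ i → ∀ j : ℕ, (j : ℕ∞) < l i → δ' k (σ (x i j)) = 0 := by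
    intro i k hk j hj
    rw [hδ', hσs, hmem i k hk j hj, map_zero]
  have hiter' : ∀ i (j k : ℕ), ((j + k : ℕ) : ℕ∞) < l i →
      σ (x i j) * σ (x i k) = ((j + k).choose j) • σ (x i (j + k)) := by
    intro i j k hjk
    rw [← map_mul, hiter i j k hjk, map_nsmul]
  set T : Stmt12Aux.Desc A n :=
    { d := δ', y := fun i j => σ (x i j), l := l,
      hadd := hδ'add, hleib := hδ'leib, hcomm := hδ'comm, hln := hln', hl1 := hl1,
      hy0 := fun i => by show σ (x i 0) = 1; rw [hx0 i, map_one], hiter := hiter', hnil := hnil',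
      hmem := hmem' } with hT
  have hphieq : ∀ i, φ' i = T.phi i := by
    intro i
    funext b
    rw [hφ' i b, Desc.phi, phiR]
    rw [finsum_subtype_of_vanish (fun j : ℕ => (j : ℕ∞) < l i)
      (fun j => (-1 : A) ^ j * (σ (x i j) * (δ' i)^[j] b))
      (fun j hj => by show (-1 : A) ^ j * (σ (x i j) * (δ' i)^[j] b) = 0
                      rw [hnil' i j hj b, mul_zero, mul_zero])]
    apply finsum_congr
    intro j
    rw [zsmul_eq_mul]
    push_cast
    rfl
  have hpsieq : ∀ i, ψ' i = T.psi i := by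
    intro i
    funext b
    rw [hψ' i b, Desc.psi, psiL]
    rw [finsum_subtype_of_vanish (fun j : ℕ => (j : ℕ∞) < l i)
      (fun j => (-1 : A) ^ j * ((δ' i)^[j] b * σ (x i j)))
      (fun j hj => by show (-1 : A) ^ j * ((δ' i)^[j] b * σ (x i j)) = 0
                      rw [hnil' i j hj b, zero_mul, mul_zero])]
    apply finsum_congr
    intro j
    rw [zsmul_eq_mul]
    push_cast
    rfl
  have hPhieq : ∀ z : A, Φ' z = T.Phi z := by
    intro z
    rw [hΦ' z, Desc.Phi, show List.ofFn φ' = List.ofFn T.phi from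
      congrArg List.ofFn (funext hphieq)]
  have hPsieq : ∀ z : A, Ψ' z = T.Psi z := by
    intro z
    rw [hΨ' z, Desc.Psi, show List.ofFn ψ' = List.ofFn T.psi from
      congrArg List.ofFn (funext hpsieq)]
  have hD : ∀ (α : {α : Fin n → ℕ // ∀ i, ((α i : ℕ∞) < l i)}) (z : A),
      dα α z = T.D α.1 z := by
    intro α z
    rw [hdα]
    rfl
  have hPeq : ∀ α : Fin n → ℕ, σ.symm (T.P α) = (List.ofFn fun i => x i (α i)).prod := by
    intro α
    have hl : (List.ofFn fun i => σ (x i (α i))) = (List.ofFn fun i => x i (α i)).map ⇑σ :=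
      (List.map_ofFn).symm
    show σ.symm (List.ofFn fun i => σ (x i (α i))).prod = _
    rw [hl, ← map_list_prod σ, hσs]
  intro a
  have hmain := Stmt12Aux.Desc.main T a
  have hfinsup : (Function.support fun α : Fin n → ℕ => T.P α * T.Phi (T.D α a)).Finite := by
    apply Set.Finite.subset (Desc.FS T a)
    intro α hα
    simp only [Function.mem_support, ne_eq] at hα ⊢
    intro h0
    apply hα
    rw [h0, Desc.Phi_zero, mul_zero]
  have hfinsup2 : (Function.support fun α : Fin n → ℕ => T.Psi (T.D α a) * T.P α).Finite := by
    apply Set.Finite.subset (Desc.FS T a)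
    intro α hα
    simp only [Function.mem_support, ne_eq] at hα ⊢
    intro h0
    apply hα
    rw [h0, Desc.Psi_zero, zero_mul]
  constructor
  · have h2 : σ.symm a = ∑ᶠ α : Fin n → ℕ, σ.symm (T.P α * T.Phi (T.D α a)) := by
      have hg := AddMonoidHom.map_finsum
        (AddMonoidHom.mk' (⇑σ.symm) (fun u v => map_add σ.symm u v)) hfinsup
      calc σ.symm a = σ.symm (∑ᶠ α : Fin n → ℕ, T.P α * T.Phi (T.D α a)) := by
            rw [← hmain.1]
        _ = _ := hg
    have h3 : ∀ α : Fin n → ℕ, σ.symm (T.P α * T.Phi (T.D α a)) =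
        (List.ofFn fun i => x i (α i)).prod * σ.symm (Φ' (T.D α a)) := by
      intro α
      rw [map_mul, hPeq, hPhieq]
    have hvan : ∀ α : Fin n → ℕ, ¬ (∀ i, ((α i : ℕ∞) < l i)) →
        (List.ofFn fun i => x i (α i)).prod * σ.symm (Φ' (T.D α a)) = 0 := by
      intro α hα
      push_neg at hα
      obtain ⟨i, hi⟩ := hα
      rw [Desc.D_eq_zero_of T α i (fun z => hnil' i (α i) (not_lt.mpr hi) z) a, hPhieq,
        Desc.Phi_zero, map_zero, mul_zero]
    calc σ.symm a
        = ∑ᶠ α : Fin n → ℕ,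
            (List.ofFn fun i => x i (α i)).prod * σ.symm (Φ' (T.D α a)) :=
          h2.trans (finsum_congr h3)
      _ = ∑ᶠ α : {α : Fin n → ℕ // ∀ i, ((α i : ℕ∞) < l i)},
            (List.ofFn fun i => x i (α.1 i)).prod * σ.symm (Φ' (T.D α.1 a)) :=
          (finsum_subtype_of_vanish _ _ hvan).symm
      _ = ∑ᶠ α : {α : Fin n → ℕ // ∀ i, ((α i : ℕ∞) < l i)},
            (List.ofFn fun i => x i (α.1 i)).prod * σ.symm (Φ' (dα α a)) := by
          apply finsum_congr
          intro α
          rw [hD]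
  · have h2 : σ.symm a = ∑ᶠ α : Fin n → ℕ, σ.symm (T.Psi (T.D α a) * T.P α) := by
      have hg := AddMonoidHom.map_finsum
        (AddMonoidHom.mk' (⇑σ.symm) (fun u v => map_add σ.symm u v)) hfinsup2
      calc σ.symm a = σ.symm (∑ᶠ α : Fin n → ℕ, T.Psi (T.D α a) * T.P α) := by
            rw [← hmain.2]
        _ = _ := hg
    have h3 : ∀ α : Fin n → ℕ, σ.symm (T.Psi (T.D α a) * T.P α) =
        σ.symm (Ψ' (T.D α a)) * (List.ofFn fun i => x i (α i)).prod := by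
      intro α
      rw [map_mul, hPeq, hPsieq]
    have hvan : ∀ α : Fin n → ℕ, ¬ (∀ i, ((α i : ℕ∞) < l i)) →
        σ.symm (Ψ' (T.D α a)) * (List.ofFn fun i => x i (α i)).prod = 0 := by
      intro α hα
      push_neg at hα
      obtain ⟨i, hi⟩ := hα
      rw [Desc.D_eq_zero_of T α i (fun z => hnil' i (α i) (not_lt.mpr hi) z) a, hPsieq,
        Desc.Psi_zero, map_zero, zero_mul]
    calc σ.symm a
        = ∑ᶠ α : Fin n → ℕ,
            σ.symm (Ψ' (T.D α a)) * (List.ofFn fun i => x i (α i)).prod :=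
          h2.trans (finsum_congr h3)
      _ = ∑ᶠ α : {α : Fin n → ℕ // ∀ i, ((α i : ℕ∞) < l i)},
            σ.symm (Ψ' (T.D α.1 a)) * (List.ofFn fun i => x i (α.1 i)).prod :=
          (finsum_subtype_of_vanish _ _ hvan).symm
      _ = ∑ᶠ α : {α : Fin n → ℕ // ∀ i, ((α i : ℕ∞) < l i)},
            σ.symm (Ψ' (dα α a)) * (List.ofFn fun i => x i (α.1 i)).prod := by
          apply finsum_congr
          intro α
          rw [hD]
end

section
/- Let A be a finite-dimensional central simple algebra over a field K with a K-basis e_1 = 1, e_2, …, e_N, and let p_1, …, p_N : A → K be the coordinate functionals (a = Σ_j p_j(a)·e_j for all a ∈ A). Then there exist finite families of elements a_{jν}, b_{jν} ∈ A with p_j(a)·1 = Σ_ν a_{jν}·a·b_{jν} for all a ∈ A, and for any such families and every K-algebra automorphism σ of A and every a ∈ A: σ^{-1}(a) = Σ_{j=1}^N (Σ_ν σ(a_{jν})·a·σ(b_{jν}))·e_j. -/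
lemma exists_one_eq_sum' {A : Type*} [Ring A] [IsSimpleRing A] {a : A} (ha : a ≠ 0) :
    ∃ (m : ℕ) (u v : Fin m → A), ∑ k, u k * a * v k = 1 := by
  classical
  let carrier : Set A := {y | ∃ (m : ℕ) (u v : Fin m → A), y = ∑ k, u k * a * v k}
  let I : TwoSidedIdeal A := TwoSidedIdeal.mk' carrier
    ⟨0, Fin.elim0, Fin.elim0, by simp⟩
    (by rintro x y ⟨m₁, u₁, v₁, rfl⟩ ⟨m₂, u₂, v₂, rfl⟩
        refine ⟨m₁ + m₂, Fin.append u₁ u₂, Fin.append v₁ v₂, ?_⟩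
        rw [Fin.sum_univ_add]
        simp [Fin.append_left, Fin.append_right])
    (by rintro x ⟨m, u, v, rfl⟩
        exact ⟨m, fun k => -u k, v, by simp [Finset.sum_neg_distrib]⟩)
    (by rintro c y ⟨m, u, v, rfl⟩
        exact ⟨m, fun k => c * u k, v, by rw [Finset.mul_sum]; simp [mul_assoc]⟩)
    (by rintro x c ⟨m, u, v, rfl⟩
        exact ⟨m, u, fun k => v k * c, by rw [Finset.sum_mul]; simp [mul_assoc]⟩)
  have haI : a ∈ I := by
    rw [TwoSidedIdeal.mem_mk']
    exact ⟨1, fun _ => 1, fun _ => 1, by simp⟩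
  have hItop : I = ⊤ := by
    rcases IsSimpleRing.simple.eq_bot_or_eq_top I with h | h
    · exact absurd (by simpa [h, TwoSidedIdeal.mem_bot] using haI) ha
    · exact h
  have h1 : (1 : A) ∈ I := hItop ▸ trivial
  rw [TwoSidedIdeal.mem_mk'] at h1
  obtain ⟨m, u, v, h⟩ := h1
  exact ⟨m, u, v, h.symm⟩

lemma key_lemma {K A : Type*} [Field K] [Ring A] [Algebra K A] [IsSimpleRing A]
    (hcenter : Subalgebra.center K A = ⊥)
    {n : ℕ} {bv : Fin n → A} (hbv : LinearIndependent K bv) :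
    ∀ (s : Finset (Fin n)) (a : Fin n → A),
      (∀ x : A, ∑ i ∈ s, a i * x * bv i = 0) → ∀ i ∈ s, a i = 0 := by
  classical
  intro s
  induction s using Finset.strongInduction with
  | _ s IH =>
    intro a ha
    by_contra hcon
    push_neg at hcon
    obtain ⟨i₀, hi₀s, hi₀⟩ := hcon
    obtain ⟨m, u, v, huv⟩ := exists_one_eq_sum' (A := A) hi₀
    set a' : Fin n → A := fun i => ∑ k, u k * a i * v k with ha'def
    have ha'i₀ : a' i₀ = 1 := huv
    have h' : ∀ x : A, ∑ i ∈ s, a' i * x * bv i = 0 := by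
      intro x
      calc ∑ i ∈ s, a' i * x * bv i
          = ∑ i ∈ s, ∑ k, u k * (a i * (v k * x) * bv i) := by
            refine Finset.sum_congr rfl fun i _ => ?_
            rw [ha'def]
            simp only [Finset.sum_mul]
            refine Finset.sum_congr rfl fun k _ => by
              simp only [mul_assoc]
        _ = ∑ k, u k * (∑ i ∈ s, a i * (v k * x) * bv i) := by
            rw [Finset.sum_comm]
            exact Finset.sum_congr rfl fun k _ => (Finset.mul_sum _ _ _).symm
        _ = 0 := by simp [ha]
    have hcomm : ∀ (c : A), ∀ i ∈ s.erase i₀, c * a' i - a' i * c = 0 := by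
      intro c
      refine IH (s.erase i₀) (Finset.erase_ssubset hi₀s) _ (fun x => ?_)
      have h1 : ∑ i ∈ s, (c * a' i - a' i * c) * x * bv i = 0 := by
        have heq : ∀ i, (c * a' i - a' i * c) * x * bv i
            = c * (a' i * x * bv i) - a' i * (c * x) * bv i := fun i => by
          simp only [sub_mul, mul_assoc]
        simp only [heq, Finset.sum_sub_distrib, ← Finset.mul_sum, h', mul_zero]
        simp
      rw [← Finset.add_sum_erase _ _ hi₀s, ha'i₀] at h1
      simpa using h1
    have hcentral : ∀ i ∈ s, a' i ∈ Subalgebra.center K A := by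
      intro i hi
      rw [Subalgebra.mem_center_iff]
      intro c
      by_cases hii : i = i₀
      · rw [hii, ha'i₀]; simp
      · have := hcomm c i (Finset.mem_erase.mpr ⟨hii, hi⟩)
        rw [sub_eq_zero] at this
        exact this
    -- so a' i = algebraMap K A (k i)
    have hbot : ∀ i ∈ s, ∃ k : K, algebraMap K A k = a' i := by
      intro i hi
      have := hcentral i hi
      rw [hcenter, Algebra.mem_bot] at this
      exact this
    choose! k hk using hbot
    have hx1 := h' 1
    have : ∑ i ∈ s, k i • bv i = 0 := by
      rw [← hx1]
      refine Finset.sum_congr rfl fun i hi => ?_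
      rw [← hk i hi, mul_one, Algebra.smul_def]
    have hk0 := linearIndependent_iff'.mp hbv s k this i₀ hi₀s
    have : a' i₀ = 0 := by rw [← hk i₀ hi₀s, hk0, map_zero]
    rw [ha'i₀] at this
    exact one_ne_zero this

/-- Let `A` be a finite-dimensional central simple algebra over a field
`K` with a `K`-basis `b 0 = 1, b 1, …, b (N-1)`, and let `b.coord j` be the coordinate
functionals.  Then there exist finite families `a j ν, c j ν ∈ A` with
`(b.coord j) v • 1 = ∑_ν a j ν * v * c j ν` for all `v ∈ A`, and for any such families,
every `K`-algebra automorphism `σ` of `A` and every `z ∈ A`: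
`σ⁻¹ z = ∑ⱼ (∑_ν σ (a j ν) * z * σ (c j ν)) * b j`. -/
theorem stmt_15 {K A : Type*} [Field K] [Ring A] [Algebra K A]
    [FiniteDimensional K A] [IsSimpleRing A]
    (hcenter : Subalgebra.center K A = ⊥)
    (N : ℕ) (hN : 0 < N) (b : Module.Basis (Fin N) K A) (hb1 : b ⟨0, hN⟩ = 1) :
    (∃ (M : ℕ) (a c : Fin N → Fin M → A),
      ∀ (j : Fin N) (v : A), (b.coord j v) • (1 : A) = ∑ ν, a j ν * v * c j ν) ∧
    (∀ (M : ℕ) (a c : Fin N → Fin M → A),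
      (∀ (j : Fin N) (v : A), (b.coord j v) • (1 : A) = ∑ ν, a j ν * v * c j ν) →
      ∀ (σ : A ≃ₐ[K] A) (z : A),
        σ.symm z = ∑ j, (∑ ν, σ (a j ν) * z * σ (c j ν)) * b j) := by
  classical
  constructor
  · -- existence
    let Ψ : (Fin N → A) →ₗ[K] (A →ₗ[K] A) :=
      { toFun := fun f =>
          { toFun := fun v => ∑ j, f j * v * b j
            map_add' := fun x y => by simp [mul_add, add_mul, Finset.sum_add_distrib]
            map_smul' := fun k x => by
              simp [Finset.smul_sum, mul_smul_comm, smul_mul_assoc] }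
        map_add' := fun f g => by
          ext v; simp [add_mul, Finset.sum_add_distrib]
        map_smul' := fun k f => by
          ext v; simp [Finset.smul_sum, smul_mul_assoc] }
    have hinj : Function.Injective Ψ := by
      rw [← LinearMap.ker_eq_bot, LinearMap.ker_eq_bot']
      intro f hf
      have hf' : ∀ x : A, ∑ j ∈ Finset.univ, f j * x * b j = 0 := fun x => by
        have := congrFun (congrArg DFunLike.coe hf) x
        simpa [Ψ] using this
      funext j
      exact key_lemma hcenter b.linearIndependent Finset.univ f hf' j (Finset.mem_univ j)
    have hrank : Module.finrank K (Fin N → A) = Module.finrank K (A →ₗ[K] A) := by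
      rw [Module.finrank_linearMap, Module.finrank_pi_fintype]
      rw [Module.finrank_eq_card_basis b]
      simp [Finset.sum_const, mul_comm]
    have hsurj : Function.Surjective Ψ :=
      (LinearMap.injective_iff_surjective_of_finrank_eq_finrank hrank).mp hinj
    refine ⟨N, fun j => Classical.choose (hsurj ((b.coord j).smulRight 1)), fun _ ν => b ν,
      fun j v => ?_⟩
    have := Classical.choose_spec (hsurj ((b.coord j).smulRight 1))
    have := congrFun (congrArg DFunLike.coe this) v
    simpa [Ψ] using this.symm
  · -- uniqueness-type consequence
    intro M a c hrep σ z
    have hterm : ∀ j, (∑ ν, σ (a j ν) * z * σ (c j ν)) = (b.coord j (σ.symm z)) • 1 := by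
      intro j
      have := congrArg σ (hrep j (σ.symm z))
      rw [map_smul, map_one] at this
      rw [this, map_sum]
      refine Finset.sum_congr rfl fun ν _ => ?_
      rw [map_mul, map_mul, σ.apply_symm_apply]
    calc σ.symm z = ∑ j, b.repr (σ.symm z) j • b j := (b.sum_repr (σ.symm z)).symm
      _ = ∑ j, (∑ ν, σ (a j ν) * z * σ (c j ν)) * b j := by
          refine Finset.sum_congr rfl fun j _ => ?_
          rw [hterm j, smul_mul_assoc, one_mul, Module.Basis.coord_apply]
end

section
/- Let K be a commutative ring in which p·1 = 0 for a prime p (e.g. a field of characteristic p), and for k ≥ 0 define the K-linear operator φ_k on the polynomial ring K[X] by φ_k(u) := Σ_{j=0}^{p-1} (-1)^j · X^{p^k·j} · D^{(p^k·j)}(u), where D^{(m)} is the m-th Hasse derivative. Then for every d ≥ 0: φ_k(X^d) = X^d if the digit of p^k in the base-p expansion of d is 0, and φ_k(X^d) = 0 otherwise. Hence φ_k is a projection of K[X] onto the span of the monomials X^d whose k-th base-p digit vanishes. -/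
open Polynomial

private lemma cast_eq_of_modeq {K : Type*} [CommRing K] {p : ℕ} (hchar : (p : K) = 0)
    {a b : ℕ} (hab : a ≡ b [MOD p]) : (a : K) = (b : K) := by
  obtain ⟨c, hc⟩ := Int.ModEq.dvd (Int.natCast_modEq_iff.mpr hab).symm
  have h : (a : K) - (b : K) = (p : K) * (c : K) := by
    have := congrArg (fun z : ℤ => (z : K)) hc
    push_cast at this
    exact this
  rw [hchar, zero_mul] at h
  exact sub_eq_zero.mp h

private lemma lucas_digit {p : ℕ} (hp : p.Prime) (k d j : ℕ) (hj : j < p) :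
    d.choose (p ^ k * j) ≡ (d / p ^ k % p).choose j [MOD p] := by
  haveI := Fact.mk hp
  rw [← Int.natCast_modEq_iff]
  have h1 := Choose.choose_modEq_choose_mul_prod_range_choose (p := p) (n := d)
    (k := p ^ k * j) k
  have hk0 : p ^ k * j / p ^ k = j := Nat.mul_div_cancel_left _ (pow_pos hp.pos k)
  have hprod : ∀ i ∈ Finset.range k, (d / p ^ i % p).choose (p ^ k * j / p ^ i % p) = 1 := by
    intro i hi
    rw [Finset.mem_range] at hi
    have : p ^ k * j / p ^ i = p * (p ^ (k - i - 1) * j) := by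
      rw [show p ^ k = p ^ i * (p * p ^ (k - i - 1)) by rw [← pow_succ', ← pow_add]; congr 1; omega,
        mul_assoc, Nat.mul_div_cancel_left _ (pow_pos hp.pos i), mul_assoc]
    rw [this, Nat.mul_mod_right, Nat.choose_zero_right]
  rw [hk0, Finset.prod_congr rfl hprod, Finset.prod_const_one, Nat.cast_one, mul_one] at h1
  refine h1.trans ?_
  have h2 := Choose.choose_modEq_choose_mod_mul_choose_div (p := p) (n := d / p ^ k) (k := j)
  rwa [Nat.mod_eq_of_lt hj, Nat.div_eq_of_lt hj, Nat.choose_zero_right, Nat.cast_one,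
    mul_one] at h2

/-- Let `K` be a commutative ring with `p·1 = 0` for a prime `p`, and
for `k ≥ 0` define the `K`-linear operator `φ` on `K[X]` by
`φ u := ∑_{j=0}^{p-1} (-1)^j · X^{p^k·j} · D^{(p^k·j)}(u)`, where `D^{(m)}` is the `m`-th
Hasse derivative.  Then for every `d ≥ 0`: `φ (X^d) = X^d` if the `k`-th base-`p` digit
`(d / p^k) % p` of `d` is `0`, and `φ (X^d) = 0` otherwise.  Hence `φ` is a projection of
`K[X]` onto the span of the monomials `X^d` whose `k`-th base-`p` digit vanishes. -/
theorem stmt_17 {K : Type*} [CommRing K] (p : ℕ) (hp : p.Prime) (hchar : (p : K) = 0)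
    (k : ℕ) (φ : Polynomial K → Polynomial K)
    (hφ : ∀ u : Polynomial K, φ u = ∑ j ∈ Finset.range p,
      (-1 : Polynomial K) ^ j * (X ^ (p ^ k * j) * hasseDeriv (p ^ k * j) u)) :
    (∀ d : ℕ, φ (X ^ d) = if d / p ^ k % p = 0 then (X : Polynomial K) ^ d else 0) ∧
    (∀ u : Polynomial K, φ (φ u) = φ u) ∧
    (∀ u : Polynomial K, φ u ∈ Submodule.span K
      {v : Polynomial K | ∃ d : ℕ, d / p ^ k % p = 0 ∧ v = X ^ d}) := by
  have part1 : ∀ d : ℕ, φ (X ^ d) = if d / p ^ k % p = 0 then (X : Polynomial K) ^ d else 0 := by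
    intro d
    set a := d / p ^ k % p with ha
    have ha_lt : a < p := Nat.mod_lt _ hp.pos
    have hterm : ∀ j : ℕ,
        (-1 : Polynomial K) ^ j * (X ^ (p ^ k * j) * hasseDeriv (p ^ k * j) (X ^ d))
          = Polynomial.C ((-1 : K) ^ j * (d.choose (p ^ k * j) : K)) * X ^ d := by
      intro j
      have hC : ((-1 : Polynomial K)) ^ j = Polynomial.C ((-1 : K) ^ j) := by
        simp
      by_cases hle : p ^ k * j ≤ d
      · rw [show (X : Polynomial K) ^ d = monomial d 1 from (monomial_one_right_eq_X_pow d).symm,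
          hasseDeriv_monomial, mul_one,
          show (X : Polynomial K) ^ (p ^ k * j) = monomial (p ^ k * j) 1 from
            (monomial_one_right_eq_X_pow _).symm,
          monomial_mul_monomial, one_mul,
          show p ^ k * j + (d - p ^ k * j) = d from by omega,
          hC, ← C_mul_X_pow_eq_monomial, ← mul_assoc, ← C_mul, C_mul_X_pow_eq_monomial]
        rw [C_mul_monomial, mul_one]
      · have h0 : d.choose (p ^ k * j) = 0 := Nat.choose_eq_zero_of_lt (by omega)
        rw [show (X : Polynomial K) ^ d = monomial d 1 from (monomial_one_right_eq_X_pow d).symm,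
          hasseDeriv_monomial, h0]
        simp
    have hsum : φ (X ^ d)
        = Polynomial.C (∑ j ∈ Finset.range p, (-1 : K) ^ j * (d.choose (p ^ k * j) : K))
          * X ^ d := by
      rw [hφ, Finset.sum_congr rfl fun j _ => hterm j, ← Finset.sum_mul, map_sum]
    have hlucas : ∀ j ∈ Finset.range p,
        (-1 : K) ^ j * (d.choose (p ^ k * j) : K) = (-1 : K) ^ j * (a.choose j : K) := by
      intro j hj
      rw [Finset.mem_range] at hj
      rw [cast_eq_of_modeq hchar (lucas_digit hp k d j hj)]
    have hint : ∑ j ∈ Finset.range p, (-1 : ℤ) ^ j * (a.choose j : ℤ)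
        = if a = 0 then 1 else 0 := by
      rw [← Int.alternating_sum_range_choose (n := a)]
      refine (Finset.sum_subset (Finset.range_subset_range.mpr ha_lt) fun x _ hx => ?_).symm
      rw [Finset.mem_range, not_lt] at hx
      simp [Nat.choose_eq_zero_of_lt (by omega : a < x)]
    have hcast : (∑ j ∈ Finset.range p, (-1 : K) ^ j * (a.choose j : K))
        = ((if a = 0 then 1 else 0 : ℤ) : K) := by
      rw [← hint]
      push_cast
      ring
    rw [hsum, Finset.sum_congr rfl hlucas, hcast]
    split_ifs with h <;> simp
  have h0 : φ 0 = 0 := by simp [hφ]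
  have hadd : ∀ u v : Polynomial K, φ (u + v) = φ u + φ v := by
    intro u v
    simp [hφ, mul_add, Finset.sum_add_distrib]
  have hsmul : ∀ (c : K) (u : Polynomial K), φ (c • u) = c • φ u := by
    intro c u
    simp [hφ, Finset.smul_sum, mul_smul_comm]
  refine ⟨part1, ?_, ?_⟩
  · intro u
    induction u using Polynomial.induction_on' with
    | add u v hu hv => rw [hadd u v, hadd (φ u) (φ v), hu, hv]
    | monomial n c =>
      rw [← smul_X_eq_monomial, hsmul, hsmul, part1 n]
      split_ifs with h
      · rw [part1 n, if_pos h]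
      · rw [h0]
  · intro u
    induction u using Polynomial.induction_on' with
    | add u v hu hv => rw [hadd]; exact Submodule.add_mem _ hu hv
    | monomial n c =>
      rw [← smul_X_eq_monomial, hsmul]
      refine Submodule.smul_mem _ _ ?_
      rw [part1 n]
      split_ifs with h
      · exact Submodule.subset_span ⟨n, h, rfl⟩
      · exact Submodule.zero_mem _
end
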